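/- arXiv:2012.05599 — 8 statements merged into one kernel-verified Lean document; each statement's English description precedes it below -/
import Mathlib

section
/- For distinct complex numbers x0,…,x_{2n+1}, the product over i from 1 to n of the cross-ratios [x0, x_{2i-1}, x_{2i}, x_{2i+1}] equals (-1)^{n-1} · ((x0-x1)(x2-x3)···(x_{2n}-x_{2n+1})) / ((x1-x2)(x3-x4)···(x_{2n+1}-x0)). -/
open Finset

/-- The cross-ratio of four complex numbers: `[a,b,c,d] = ((a-b)(c-d))/((a-d)(c-b))`. -/
noncomputable def crossRatio (a b c d : ℂ) : ℂ := ((a - b) * (c - d)) / ((a - d) * (c - b))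

/-- For distinct complex numbers `x0,…,x_{2n+1}`,
`∏_{i=1}^n [x0, x_{2i-1}, x_{2i}, x_{2i+1}]
  = (-1)^{n-1} · ((x0-x1)(x2-x3)···(x_{2n}-x_{2n+1})) / ((x1-x2)(x3-x4)···(x_{2n+1}-x0))`. -/
theorem prod_crossRatio_eq (n : ℕ) (hn : 1 ≤ n) (x : ℕ → ℂ)
    (hdist : ∀ i ≤ 2 * n + 1, ∀ j ≤ 2 * n + 1, i ≠ j → x i ≠ x j) :
    ∏ i ∈ Finset.Icc 1 n,
        crossRatio (x 0) (x (2 * i - 1)) (x (2 * i)) (x (2 * i + 1)) =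
      (-1) ^ (n - 1) *
        ((∏ i ∈ Finset.range (n + 1), (x (2 * i) - x (2 * i + 1))) /
          ((∏ i ∈ Finset.range n, (x (2 * i + 1) - x (2 * i + 2))) * (x (2 * n + 1) - x 0))) := by
  revert hdist
  induction n, hn using Nat.le_induction with
  | base =>
    intro hdist
    have h1 : x 0 - x 3 ≠ 0 := sub_ne_zero.mpr (hdist 0 (by norm_num) 3 (by norm_num) (by norm_num))
    have h2 : x 2 - x 1 ≠ 0 := sub_ne_zero.mpr (hdist 2 (by norm_num) 1 (by norm_num) (by norm_num))
    have h3 : x 1 - x 2 ≠ 0 := sub_ne_zero.mpr (hdist 1 (by norm_num) 2 (by norm_num) (by norm_num))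
    have h4 : x 3 - x 0 ≠ 0 := sub_ne_zero.mpr (hdist 3 (by norm_num) 0 (by norm_num) (by norm_num))
    simp only [show Finset.Icc 1 1 = {1} from rfl, Finset.prod_singleton, crossRatio]
    norm_num [Finset.prod_range_succ]
    rw [div_eq_div_iff (by exact mul_ne_zero h1 h2) (by exact mul_ne_zero h3 h4)]
    ring
  | succ n hn ih =>
    intro hdist
    have hdist' : ∀ i ≤ 2 * n + 1, ∀ j ≤ 2 * n + 1, i ≠ j → x i ≠ x j :=
      fun i hi j hj hij => hdist i (by omega) j (by omega) hij
    have sub_ne : ∀ i ≤ 2 * (n+1) + 1, ∀ j ≤ 2 * (n+1) + 1, i ≠ j → x i - x j ≠ 0 :=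
      fun i hi j hj hij => sub_ne_zero.mpr (hdist i hi j hj hij)
    rw [Finset.prod_Icc_succ_top (by omega : 1 ≤ n + 1), ih hdist']
    have e1 : 2 * (n + 1) - 1 = 2 * n + 1 := by omega
    have e2 : 2 * (n + 1) = 2 * n + 2 := by omega
    rw [e1, e2]
    rw [Finset.prod_range_succ (fun i => x (2 * i) - x (2 * i + 1)) (n+1),
        Finset.prod_range_succ (fun i => x (2 * i + 1) - x (2 * i + 2)) n]
    have en : (n + 1) - 1 = (n - 1) + 1 := by omega
    rw [en, pow_succ]
    have hQ : (∏ i ∈ Finset.range n, (x (2 * i + 1) - x (2 * i + 2))) ≠ 0 := by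
      apply Finset.prod_ne_zero_iff.mpr
      intro i hi
      exact sub_ne (2*i+1) (by simp at hi; omega) (2*i+2) (by simp at hi; omega) (by omega)
    have hA : x (2*n+1) - x 0 ≠ 0 := sub_ne _ (by omega) 0 (by omega) (by omega)
    have hB : x 0 - x (2*n+3) ≠ 0 := sub_ne 0 (by omega) _ (by omega) (by omega)
    have hC : x (2*n+2) - x (2*n+1) ≠ 0 := sub_ne _ (by omega) _ (by omega) (by omega)
    have hD : x (2*n+3) - x 0 ≠ 0 := sub_ne _ (by omega) 0 (by omega) (by omega)
    have hE : x (2*n+1) - x (2*n+2) ≠ 0 := sub_ne _ (by omega) _ (by omega) (by omega)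
    simp only [crossRatio]
    set P := ∏ i ∈ Finset.range (n + 1), (x (2 * i) - x (2 * i + 1)) with hP
    set Q := ∏ i ∈ Finset.range n, (x (2 * i + 1) - x (2 * i + 2)) with hQdef
    field_simp
    ring
end

section
/- If an alternating polygon P is decomposed by a diagonal into two alternating polygons P1 and P2, then the cross-ratio function satisfies cr(P) = cr(P1)·cr(P2). -/
/-- The cross-ratio function of an alternating `(2n+2)`-gon `P = (p 0, …, p (2n+1))` with
vertices labelled by points `x (p i)`:
`cr(P) = ∏_{i=1}^n [x_{p_0}, x_{p_{2i-1}}, x_{p_{2i}}, x_{p_{2i+1}}]` if `P` is even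
(i.e. `p 0` is even), and the inverse of this product if `P` is odd. -/
noncomputable def crPolygon (x : ℕ → ℂ) (p : ℕ → ℕ) (n : ℕ) : ℂ :=
  if Even (p 0) then
    ∏ i ∈ Finset.range n,
      crossRatio (x (p 0)) (x (p (2 * i + 1))) (x (p (2 * i + 2))) (x (p (2 * i + 3)))
  else
    (∏ i ∈ Finset.range n,
      crossRatio (x (p 0)) (x (p (2 * i + 1))) (x (p (2 * i + 2))) (x (p (2 * i + 3))))⁻¹

private lemma prod_neg_eq (f : ℕ → ℂ) (m : ℕ) :
    ∏ j ∈ Finset.range m, (-f j) = (-1)^m * ∏ j ∈ Finset.range m, f j := by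
  induction m with
  | zero => simp
  | succ k ih => rw [Finset.prod_range_succ, Finset.prod_range_succ, ih]; ring

private lemma xsub_congr (x : ℕ → ℂ) (p : ℕ → ℕ) {e1 e2 e3 e4 : ℕ}
    (h1 : e1 = e3) (h2 : e2 = e4) : x (p e1) - x (p e2) = x (p e3) - x (p e4) := by
  rw [h1, h2]

private lemma xsub_neg_congr (x : ℕ → ℂ) (p : ℕ → ℕ) {e1 e2 e3 e4 : ℕ}
    (h1 : e1 = e4) (h2 : e2 = e3) : x (p e1) - x (p e2) = -(x (p e3) - x (p e4)) := by
  rw [h1, h2]; ring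

private lemma prod_xsub_ne_zero (x : ℕ → ℂ) (p : ℕ → ℕ) (N m : ℕ) (e1 e2 : ℕ → ℕ)
    (hb : ∀ j < m, e1 j ≤ N ∧ e2 j ≤ N ∧ e1 j ≠ e2 j)
    (hd : ∀ k ≤ N, ∀ l ≤ N, k ≠ l → x (p k) ≠ x (p l)) :
    ∏ j ∈ Finset.range m, (x (p (e1 j)) - x (p (e2 j))) ≠ 0 := by
  rw [Finset.prod_ne_zero_iff]
  intro j hj
  have h := hb j (Finset.mem_range.mp hj)
  exact sub_ne_zero.mpr (hd _ h.1 _ h.2.1 h.2.2)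

private lemma split_even (A : ℕ → ℂ) (a b c : ℕ) :
    ∏ j ∈ Finset.range (a+b+c), (A (2*j) - A (2*j+1)) =
    (∏ j ∈ Finset.range a, (A (2*j) - A (2*j+1))) *
    (∏ j ∈ Finset.range b, (A (2*(a+j)) - A (2*(a+j)+1))) *
    (∏ j ∈ Finset.range c, (A (2*(a+b+j)) - A (2*(a+b+j)+1))) := by
  rw [Finset.prod_range_add, Finset.prod_range_add]

private lemma split_odd (A : ℕ → ℂ) (a b c : ℕ) :
    ∏ j ∈ Finset.range (a+b+c), (A (2*j+2) - A (2*j+1)) =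
    (∏ j ∈ Finset.range a, (A (2*j+2) - A (2*j+1))) *
    (∏ j ∈ Finset.range b, (A (2*(a+j)+2) - A (2*(a+j)+1))) *
    (∏ j ∈ Finset.range c, (A (2*(a+b+j)+2) - A (2*(a+b+j)+1))) := by
  rw [Finset.prod_range_add, Finset.prod_range_add]

private lemma EP_eq (A : ℕ → ℂ) (n : ℕ)
    (hne : ∀ k ≤ 2*n+1, ∀ l ≤ 2*n+1, k ≠ l → A k ≠ A l) :
    ∏ i ∈ Finset.range n, crossRatio (A 0) (A (2 * i + 1)) (A (2 * i + 2)) (A (2 * i + 3))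
    = (∏ j ∈ Finset.range (n+1), (A (2*j) - A (2*j+1))) /
      ((A 0 - A (2*n+1)) * ∏ j ∈ Finset.range n, (A (2*j+2) - A (2*j+1))) := by
  induction n with
  | zero =>
      have h1 : A 0 - A 1 ≠ 0 := sub_ne_zero.mpr (hne 0 (by omega) 1 (by omega) (by omega))
      simp only [Finset.range_zero, Finset.prod_empty, Finset.prod_range_one, mul_one]
      norm_num
      rw [div_self h1]
  | succ m ih =>
      have hne' : ∀ k ≤ 2*m+1, ∀ l ≤ 2*m+1, k ≠ l → A k ≠ A l :=
        fun k hk l hl h => hne k (by omega) l (by omega) h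
      have h1 : A 0 - A (2*m+1) ≠ 0 := sub_ne_zero.mpr (hne 0 (by omega) (2*m+1) (by omega) (by omega))
      have h2 : A 0 - A (2*m+3) ≠ 0 := sub_ne_zero.mpr (hne 0 (by omega) (2*m+3) (by omega) (by omega))
      have h3 : A (2*m+2) - A (2*m+1) ≠ 0 := sub_ne_zero.mpr (hne (2*m+2) (by omega) (2*m+1) (by omega) (by omega))
      have hD : ∏ j ∈ Finset.range m, (A (2*j+2) - A (2*j+1)) ≠ 0 := by
        rw [Finset.prod_ne_zero_iff]
        intro j hj
        have := Finset.mem_range.mp hj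
        exact sub_ne_zero.mpr (hne (2*j+2) (by omega) (2*j+1) (by omega) (by omega))
      rw [Finset.prod_range_succ, ih hne']
      rw [Finset.prod_range_succ (fun j => A (2*j) - A (2*j+1)) (m+1),
          Finset.prod_range_succ (fun j => A (2*j+2) - A (2*j+1)) m]
      rw [show 2*(m+1) = 2*m+2 from by ring]
      rw [show 2*m+2+1 = 2*m+3 from by ring]
      simp only [crossRatio]
      field_simp

set_option maxHeartbeats 2000000 in
/-- If an alternating polygon `P = (p 0, …, p (2n+1))` is decomposed by the diagonal joining
vertex `i` and vertex `j = i + 2s + 1` (vertices of opposite parity) into the two alternating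
polygons `P1 = (p 0, …, p i, p j, …, p (2n+1))` and `P2 = (p i, …, p j)`, then
`cr(P) = cr(P1) · cr(P2)`. -/
theorem crPolygon_decomposition (n s i : ℕ) (x : ℕ → ℂ) (p : ℕ → ℕ)
    (hmono : StrictMonoOn p (Set.Iic (2 * n + 1)))
    (halt : ∀ k < 2 * n + 1, Odd (p (k + 1) - p k))
    (hdist : ∀ k ≤ 2 * n + 1, ∀ l ≤ 2 * n + 1, k ≠ l → x (p k) ≠ x (p l))
    (hs : 1 ≤ s) (hij : i + 2 * s + 1 ≤ 2 * n + 1)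
    (hdiag : ¬(i = 0 ∧ i + 2 * s + 1 = 2 * n + 1)) :
    crPolygon x p n =
      crPolygon x (fun k => if k ≤ i then p k else p (k + 2 * s)) (n - s) *
        crPolygon x (fun k => p (i + k)) s := by
  have hsn : s ≤ n := by omega
  have hpar : ∀ k, k ≤ 2*n+1 → p k % 2 = (p 0 + k) % 2 := by
    intro k
    induction k with
    | zero => intro _; omega
    | succ t iht =>
        intro hk
        obtain ⟨u, hu⟩ := halt t (by omega)
        have h2 : p t < p (t+1) :=
          hmono (Set.mem_Iic.mpr (by omega)) (Set.mem_Iic.mpr (by omega)) (by omega)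
        have h3 := iht (by omega)
        omega
  have HP := EP_eq (fun k => x (p k)) n hdist
  have hBne : ∀ k ≤ 2*(n-s)+1, ∀ l ≤ 2*(n-s)+1, k ≠ l →
      (fun k => x (if k ≤ i then p k else p (k + 2*s))) k ≠
      (fun k => x (if k ≤ i then p k else p (k + 2*s))) l := by
    intro k hk l hl hkl
    simp only
    split_ifs with h1 h2 h2 <;> exact hdist _ (by omega) _ (by omega) (by omega)
  have HQ := EP_eq (fun k => x (if k ≤ i then p k else p (k + 2*s))) (n-s) hBne
  have hCne : ∀ k ≤ 2*s+1, ∀ l ≤ 2*s+1, k ≠ l →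
      (fun k => x (p (i + k))) k ≠ (fun k => x (p (i + k))) l := by
    intro k hk l hl hkl
    exact hdist _ (by omega) _ (by omega) (by omega)
  have HR := EP_eq (fun k => x (p (i + k))) s hCne
  beta_reduce at HP HQ HR
  rw [if_neg (show ¬(2*(n-s)+1 ≤ i) from by omega),
      show 2*(n-s)+1 + 2*s = 2*n+1 from by omega,
      if_pos (Nat.zero_le i)] at HQ
  rw [show i + 0 = i from rfl, show i + (2*s+1) = i + 2*s+1 from by omega] at HR
  simp only [crPolygon]
  rw [show (if 0 ≤ i then p 0 else p (0 + 2*s)) = p 0 from if_pos (Nat.zero_le i),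
      show p (i + 0) = p i from by rw [Nat.add_zero]]
  have hcl : x (p 0) - x (p (2*n+1)) ≠ 0 :=
    sub_ne_zero.mpr (hdist 0 (by omega) (2*n+1) (by omega) (by omega))
  have hdg : x (p i) - x (p (i + 2*s+1)) ≠ 0 :=
    sub_ne_zero.mpr (hdist i (by omega) (i+2*s+1) (by omega) (by omega))
  have hpi := hpar i (by omega)
  rcases Nat.even_or_odd i with hie | hio
  · -- i even
    obtain ⟨a, ha⟩ := hie
    have eNp : (∏ j ∈ Finset.range (n+1), (x (p (2*j)) - x (p (2*j+1))))
        = (∏ j ∈ Finset.range a, (x (p (2*j)) - x (p (2*j+1)))) *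
          (∏ j ∈ Finset.range (s+1), (x (p (2*(a+j))) - x (p (2*(a+j)+1)))) *
          (∏ j ∈ Finset.range (n-s-a), (x (p (2*(a+(s+1)+j))) - x (p (2*(a+(s+1)+j)+1)))) := by
      rw [show Finset.range (n+1) = Finset.range (a+(s+1)+(n-s-a)) from by congr 1; omega]
      exact split_even (fun k => x (p k)) a (s+1) (n-s-a)
    have eDp : (∏ j ∈ Finset.range n, (x (p (2*j+2)) - x (p (2*j+1))))
        = (∏ j ∈ Finset.range a, (x (p (2*j+2)) - x (p (2*j+1)))) *
          (∏ j ∈ Finset.range s, (x (p (2*(a+j)+2)) - x (p (2*(a+j)+1)))) *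
          (∏ j ∈ Finset.range (n-s-a), (x (p (2*(a+s+j)+2)) - x (p (2*(a+s+j)+1)))) := by
      rw [show Finset.range n = Finset.range (a+s+(n-s-a)) from by congr 1; omega]
      exact split_odd (fun k => x (p k)) a s (n-s-a)
    have eNq : (∏ j ∈ Finset.range (n-s+1),
          (x (if 2*j ≤ i then p (2*j) else p (2*j + 2*s)) -
           x (if 2*j+1 ≤ i then p (2*j+1) else p (2*j+1 + 2*s))))
        = (∏ j ∈ Finset.range a, (x (p (2*j)) - x (p (2*j+1)))) *
          (x (p i) - x (p (i + 2*s+1))) *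
          (∏ j ∈ Finset.range (n-s-a), (x (p (2*(a+(s+1)+j))) - x (p (2*(a+(s+1)+j)+1)))) := by
      rw [show Finset.range (n-s+1) = Finset.range (a+1+(n-s-a)) from by congr 1; omega]
      refine (split_even (fun k => x (if k ≤ i then p k else p (k + 2*s))) a 1 (n-s-a)).trans ?_
      beta_reduce
      congr 1
      · congr 1
        · refine Finset.prod_congr rfl fun j hj => ?_
          have hj' := Finset.mem_range.mp hj
          rw [if_pos (show 2*j ≤ i by omega), if_pos (show 2*j+1 ≤ i by omega)]
        · rw [Finset.prod_range_one]
          rw [if_pos (show 2*(a+0) ≤ i by omega), if_neg (show ¬(2*(a+0)+1 ≤ i) by omega)]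
          exact xsub_congr x p (by omega) (by omega)
      · refine Finset.prod_congr rfl fun j hj => ?_
        have hj' := Finset.mem_range.mp hj
        rw [if_neg (show ¬(2*(a+1+j) ≤ i) by omega), if_neg (show ¬(2*(a+1+j)+1 ≤ i) by omega)]
        exact xsub_congr x p (by omega) (by omega)
    have eDq : (∏ j ∈ Finset.range (n-s),
          (x (if 2*j+2 ≤ i then p (2*j+2) else p (2*j+2 + 2*s)) -
           x (if 2*j+1 ≤ i then p (2*j+1) else p (2*j+1 + 2*s))))
        = (∏ j ∈ Finset.range a, (x (p (2*j+2)) - x (p (2*j+1)))) *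
          (∏ j ∈ Finset.range (n-s-a), (x (p (2*(a+s+j)+2)) - x (p (2*(a+s+j)+1)))) := by
      rw [show Finset.range (n-s) = Finset.range (a+(n-s-a)) from by congr 1; omega]
      rw [Finset.prod_range_add]
      beta_reduce
      congr 1
      · refine Finset.prod_congr rfl fun j hj => ?_
        have hj' := Finset.mem_range.mp hj
        rw [if_pos (show 2*j+2 ≤ i by omega), if_pos (show 2*j+1 ≤ i by omega)]
      · refine Finset.prod_congr rfl fun j hj => ?_
        have hj' := Finset.mem_range.mp hj
        rw [if_neg (show ¬(2*(a+j)+2 ≤ i) by omega), if_neg (show ¬(2*(a+j)+1 ≤ i) by omega)]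
        exact xsub_congr x p (by omega) (by omega)
    have eNr : (∏ j ∈ Finset.range (s+1), (x (p (i + 2*j)) - x (p (i + (2*j+1)))))
        = ∏ j ∈ Finset.range (s+1), (x (p (2*(a+j))) - x (p (2*(a+j)+1))) :=
      Finset.prod_congr rfl fun j hj => xsub_congr x p (by omega) (by omega)
    have eDr : (∏ j ∈ Finset.range s, (x (p (i + (2*j+2))) - x (p (i + (2*j+1)))))
        = ∏ j ∈ Finset.range s, (x (p (2*(a+j)+2)) - x (p (2*(a+j)+1))) :=
      Finset.prod_congr rfl fun j hj => xsub_congr x p (by omega) (by omega)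
    have hX1 : (∏ j ∈ Finset.range a, (x (p (2*j)) - x (p (2*j+1)))) ≠ 0 :=
      prod_xsub_ne_zero x p (2*n+1) a _ _ (fun j hj => ⟨by omega, by omega, by omega⟩) hdist
    have hX2 : (∏ j ∈ Finset.range (s+1), (x (p (2*(a+j))) - x (p (2*(a+j)+1)))) ≠ 0 :=
      prod_xsub_ne_zero x p (2*n+1) (s+1) _ _ (fun j hj => ⟨by omega, by omega, by omega⟩) hdist
    have hX3 : (∏ j ∈ Finset.range (n-s-a), (x (p (2*(a+(s+1)+j))) - x (p (2*(a+(s+1)+j)+1)))) ≠ 0 :=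
      prod_xsub_ne_zero x p (2*n+1) (n-s-a) _ _ (fun j hj => ⟨by omega, by omega, by omega⟩) hdist
    have hY1 : (∏ j ∈ Finset.range a, (x (p (2*j+2)) - x (p (2*j+1)))) ≠ 0 :=
      prod_xsub_ne_zero x p (2*n+1) a _ _ (fun j hj => ⟨by omega, by omega, by omega⟩) hdist
    have hY2 : (∏ j ∈ Finset.range s, (x (p (2*(a+j)+2)) - x (p (2*(a+j)+1)))) ≠ 0 :=
      prod_xsub_ne_zero x p (2*n+1) s _ _ (fun j hj => ⟨by omega, by omega, by omega⟩) hdist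
    have hY3 : (∏ j ∈ Finset.range (n-s-a), (x (p (2*(a+s+j)+2)) - x (p (2*(a+s+j)+1)))) ≠ 0 :=
      prod_xsub_ne_zero x p (2*n+1) (n-s-a) _ _ (fun j hj => ⟨by omega, by omega, by omega⟩) hdist
    by_cases h0 : Even (p 0)
    · have hpie : Even (p i) := by
        rw [Nat.even_iff] at h0 ⊢
        omega
      rw [if_pos h0, if_pos h0, if_pos hpie, HP, HQ, HR, eNp, eDp, eNq, eDq, eNr, eDr]
      field_simp [hcl, hdg, hX1, hX2, hX3, hY1, hY2, hY3]
    · have hpie : ¬ Even (p i) := by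
        rw [Nat.even_iff] at h0 ⊢
        omega
      rw [if_neg h0, if_neg h0, if_neg hpie, HP, HQ, HR, eNp, eDp, eNq, eDq, eNr, eDr]
      field_simp [hcl, hdg, hX1, hX2, hX3, hY1, hY2, hY3]
  · -- i odd
    obtain ⟨a, ha⟩ := hio
    have eNp : (∏ j ∈ Finset.range (n+1), (x (p (2*j)) - x (p (2*j+1))))
        = (∏ j ∈ Finset.range (a+1), (x (p (2*j)) - x (p (2*j+1)))) *
          (∏ j ∈ Finset.range s, (x (p (2*(a+1+j))) - x (p (2*(a+1+j)+1)))) *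
          (∏ j ∈ Finset.range (n-s-a), (x (p (2*(a+1+s+j))) - x (p (2*(a+1+s+j)+1)))) := by
      rw [show Finset.range (n+1) = Finset.range (a+1+s+(n-s-a)) from by congr 1; omega]
      exact split_even (fun k => x (p k)) (a+1) s (n-s-a)
    have eDp : (∏ j ∈ Finset.range n, (x (p (2*j+2)) - x (p (2*j+1))))
        = (∏ j ∈ Finset.range a, (x (p (2*j+2)) - x (p (2*j+1)))) *
          (∏ j ∈ Finset.range (s+1), (x (p (2*(a+j)+2)) - x (p (2*(a+j)+1)))) *
          (∏ j ∈ Finset.range (n-s-a-1), (x (p (2*(a+(s+1)+j)+2)) - x (p (2*(a+(s+1)+j)+1)))) := by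
      rw [show Finset.range n = Finset.range (a+(s+1)+(n-s-a-1)) from by congr 1; omega]
      exact split_odd (fun k => x (p k)) a (s+1) (n-s-a-1)
    have eNq : (∏ j ∈ Finset.range (n-s+1),
          (x (if 2*j ≤ i then p (2*j) else p (2*j + 2*s)) -
           x (if 2*j+1 ≤ i then p (2*j+1) else p (2*j+1 + 2*s))))
        = (∏ j ∈ Finset.range (a+1), (x (p (2*j)) - x (p (2*j+1)))) *
          (∏ j ∈ Finset.range (n-s-a), (x (p (2*(a+1+s+j))) - x (p (2*(a+1+s+j)+1)))) := by
      rw [show Finset.range (n-s+1) = Finset.range (a+1+(n-s-a)) from by congr 1; omega]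
      rw [Finset.prod_range_add]
      beta_reduce
      congr 1
      · refine Finset.prod_congr rfl fun j hj => ?_
        have hj' := Finset.mem_range.mp hj
        rw [if_pos (show 2*j ≤ i by omega), if_pos (show 2*j+1 ≤ i by omega)]
      · refine Finset.prod_congr rfl fun j hj => ?_
        have hj' := Finset.mem_range.mp hj
        rw [if_neg (show ¬(2*(a+1+j) ≤ i) by omega), if_neg (show ¬(2*(a+1+j)+1 ≤ i) by omega)]
        exact xsub_congr x p (by omega) (by omega)
    have eDq : (∏ j ∈ Finset.range (n-s),
          (x (if 2*j+2 ≤ i then p (2*j+2) else p (2*j+2 + 2*s)) -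
           x (if 2*j+1 ≤ i then p (2*j+1) else p (2*j+1 + 2*s))))
        = (∏ j ∈ Finset.range a, (x (p (2*j+2)) - x (p (2*j+1)))) *
          (-(x (p i) - x (p (i + 2*s+1)))) *
          (∏ j ∈ Finset.range (n-s-a-1), (x (p (2*(a+(s+1)+j)+2)) - x (p (2*(a+(s+1)+j)+1)))) := by
      rw [show Finset.range (n-s) = Finset.range (a+1+(n-s-a-1)) from by congr 1; omega]
      refine (split_odd (fun k => x (if k ≤ i then p k else p (k + 2*s))) a 1 (n-s-a-1)).trans ?_
      beta_reduce
      congr 1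
      · congr 1
        · refine Finset.prod_congr rfl fun j hj => ?_
          have hj' := Finset.mem_range.mp hj
          rw [if_pos (show 2*j+2 ≤ i by omega), if_pos (show 2*j+1 ≤ i by omega)]
        · rw [Finset.prod_range_one]
          rw [if_neg (show ¬(2*(a+0)+2 ≤ i) by omega), if_pos (show 2*(a+0)+1 ≤ i by omega)]
          exact xsub_neg_congr x p (by omega) (by omega)
      · refine Finset.prod_congr rfl fun j hj => ?_
        have hj' := Finset.mem_range.mp hj
        rw [if_neg (show ¬(2*(a+1+j)+2 ≤ i) by omega), if_neg (show ¬(2*(a+1+j)+1 ≤ i) by omega)]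
        exact xsub_congr x p (by omega) (by omega)
    have eNr : (∏ j ∈ Finset.range (s+1), (x (p (i + 2*j)) - x (p (i + (2*j+1)))))
        = (-1)^(s+1) * ∏ j ∈ Finset.range (s+1), (x (p (2*(a+j)+2)) - x (p (2*(a+j)+1))) := by
      rw [← prod_neg_eq]
      refine Finset.prod_congr rfl fun j hj => ?_
      beta_reduce
      exact xsub_neg_congr x p (by omega) (by omega)
    have eDr : (∏ j ∈ Finset.range s, (x (p (i + (2*j+2))) - x (p (i + (2*j+1)))))
        = (-1)^s * ∏ j ∈ Finset.range s, (x (p (2*(a+1+j))) - x (p (2*(a+1+j)+1))) := by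
      rw [← prod_neg_eq]
      refine Finset.prod_congr rfl fun j hj => ?_
      beta_reduce
      exact xsub_neg_congr x p (by omega) (by omega)
    have hX1 : (∏ j ∈ Finset.range (a+1), (x (p (2*j)) - x (p (2*j+1)))) ≠ 0 :=
      prod_xsub_ne_zero x p (2*n+1) (a+1) _ _ (fun j hj => ⟨by omega, by omega, by omega⟩) hdist
    have hX2 : (∏ j ∈ Finset.range s, (x (p (2*(a+1+j))) - x (p (2*(a+1+j)+1)))) ≠ 0 :=
      prod_xsub_ne_zero x p (2*n+1) s _ _ (fun j hj => ⟨by omega, by omega, by omega⟩) hdist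
    have hX3 : (∏ j ∈ Finset.range (n-s-a), (x (p (2*(a+1+s+j))) - x (p (2*(a+1+s+j)+1)))) ≠ 0 :=
      prod_xsub_ne_zero x p (2*n+1) (n-s-a) _ _ (fun j hj => ⟨by omega, by omega, by omega⟩) hdist
    have hY1 : (∏ j ∈ Finset.range a, (x (p (2*j+2)) - x (p (2*j+1)))) ≠ 0 :=
      prod_xsub_ne_zero x p (2*n+1) a _ _ (fun j hj => ⟨by omega, by omega, by omega⟩) hdist
    have hY2 : (∏ j ∈ Finset.range (s+1), (x (p (2*(a+j)+2)) - x (p (2*(a+j)+1)))) ≠ 0 :=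
      prod_xsub_ne_zero x p (2*n+1) (s+1) _ _ (fun j hj => ⟨by omega, by omega, by omega⟩) hdist
    have hY3 : (∏ j ∈ Finset.range (n-s-a-1), (x (p (2*(a+(s+1)+j)+2)) - x (p (2*(a+(s+1)+j)+1)))) ≠ 0 :=
      prod_xsub_ne_zero x p (2*n+1) (n-s-a-1) _ _ (fun j hj => ⟨by omega, by omega, by omega⟩) hdist
    have hm1 : ((-1 : ℂ)) ≠ 0 := by norm_num
    have hpw : ((-1 : ℂ))^s ≠ 0 := pow_ne_zero s hm1
    have hdg' : x (p (i + 2*s+1)) - x (p i) ≠ 0 :=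
      sub_ne_zero.mpr (hdist (i+2*s+1) (by omega) i (by omega) (by omega))
    by_cases h0 : Even (p 0)
    · have hpie : ¬ Even (p i) := by
        rw [Nat.even_iff] at h0 ⊢
        omega
      rw [if_pos h0, if_pos h0, if_neg hpie, HP, HQ, HR, eNp, eDp, eNq, eDq, eNr, eDr]
      rw [pow_succ]
      field_simp [hcl, hdg, hdg', hpw, hX1, hX2, hX3, hY1, hY2, hY3]
    · have hpie : Even (p i) := by
        rw [Nat.even_iff] at h0 ⊢
        omega
      rw [if_neg h0, if_neg h0, if_pos hpie, HP, HQ, HR, eNp, eDp, eNq, eDq, eNr, eDr]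
      rw [pow_succ]
      field_simp [hcl, hdg, hdg', hpw, hX1, hX2, hX3, hY1, hY2, hY3]
end

section
/- Let A be a commutative semigroup and QSh^A the quasi-shuffle algebra on words over A. Then the quasi-shuffle product ⋆ is associative. -/
/-- The quasi-shuffle product on words over an alphabet `A` carrying a (semigroup) product,
with values in the free `ℚ`-vector space on words: `ω⋆1 = 1⋆ω = ω` and
`(a1ω1)⋆(a2ω2) = a1(ω1⋆(a2ω2)) + a2((a1ω1)⋆ω2) + (a1·a2)(ω1⋆ω2)`. -/
noncomputable def qsh {A : Type*} [Mul A] : List A → List A → (List A →₀ ℚ)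
  | [], w => Finsupp.single w 1
  | a :: w1, [] => Finsupp.single (a :: w1) 1
  | a :: w1, b :: w2 =>
      Finsupp.mapDomain (a :: ·) (qsh w1 (b :: w2)) +
      Finsupp.mapDomain (b :: ·) (qsh (a :: w1) w2) +
      Finsupp.mapDomain ((a * b) :: ·) (qsh w1 w2)
  termination_by x y => x.length + y.length

/-- The bilinear extension of the quasi-shuffle product to the free `ℚ`-vector space
on words over `A`. -/
noncomputable def qshStar {A : Type*} [Mul A] (f g : List A →₀ ℚ) : List A →₀ ℚ :=
  f.sum fun w1 c1 => g.sum fun w2 c2 => (c1 * c2) • qsh w1 w2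

section WordLevel

variable {A : Type*} [Mul A]

theorem qsh_nil_left (w : List A) : qsh [] w = Finsupp.single w 1 := by simp [qsh]

theorem qsh_nil_right (u : List A) : qsh u [] = Finsupp.single u 1 := by
  cases u <;> simp [qsh]

theorem qsh_cons (a b : A) (u v : List A) :
    qsh (a :: u) (b :: v) =
      Finsupp.mapDomain (a :: ·) (qsh u (b :: v)) +
      Finsupp.mapDomain (b :: ·) (qsh (a :: u) v) +
      Finsupp.mapDomain ((a * b) :: ·) (qsh u v) := by
  rw [qsh]

/-- `F ⋆ (single w 1)`. -/
noncomputable def starW (F : List A →₀ ℚ) (w : List A) : List A →₀ ℚ :=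
  F.sum fun u c => c • qsh u w

/-- `(single u 1) ⋆ F`. -/
noncomputable def wStar (u : List A) (F : List A →₀ ℚ) : List A →₀ ℚ :=
  F.sum fun v c => c • qsh u v

theorem starW_single (u : List A) (c : ℚ) (w : List A) :
    starW (Finsupp.single u c) w = c • qsh u w :=
  Finsupp.sum_single_index (zero_smul _ _)

theorem wStar_single (u v : List A) (c : ℚ) :
    wStar u (Finsupp.single v c) = c • qsh u v :=
  Finsupp.sum_single_index (zero_smul _ _)

theorem starW_add (F G : List A →₀ ℚ) (w : List A) :
    starW (F + G) w = starW F w + starW G w :=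
  Finsupp.sum_add_index' (fun _ => zero_smul _ _) (fun _ _ _ => add_smul _ _ _)

theorem wStar_add (u : List A) (F G : List A →₀ ℚ) :
    wStar u (F + G) = wStar u F + wStar u G :=
  Finsupp.sum_add_index' (fun _ => zero_smul _ _) (fun _ _ _ => add_smul _ _ _)

theorem starW_mapDomain (a : A) (F : List A →₀ ℚ) (w : List A) :
    starW (Finsupp.mapDomain (a :: ·) F) w = F.sum fun u c => c • qsh (a :: u) w :=
  Finsupp.sum_mapDomain_index (fun _ => zero_smul _ _) (fun _ _ _ => add_smul _ _ _)

theorem wStar_mapDomain (u : List A) (b : A) (F : List A →₀ ℚ) :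
    wStar u (Finsupp.mapDomain (b :: ·) F) = F.sum fun v c => c • qsh u (b :: v) :=
  Finsupp.sum_mapDomain_index (fun _ => zero_smul _ _) (fun _ _ _ => add_smul _ _ _)

theorem starW_nil (F : List A →₀ ℚ) : starW F [] = F := by
  unfold starW
  conv_rhs => rw [← F.sum_single]
  exact Finsupp.sum_congr fun u _ => by
    rw [qsh_nil_right, Finsupp.smul_single, smul_eq_mul, mul_one]

theorem wStar_nil (F : List A →₀ ℚ) : wStar [] F = F := by
  unfold wStar
  conv_rhs => rw [← F.sum_single]
  exact Finsupp.sum_congr fun v _ => by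
    rw [qsh_nil_left, Finsupp.smul_single, smul_eq_mul, mul_one]

theorem starW_mapDomain_cons (a b : A) (F : List A →₀ ℚ) (w : List A) :
    starW (Finsupp.mapDomain (a :: ·) F) (b :: w) =
      Finsupp.mapDomain (a :: ·) (starW F (b :: w)) +
      Finsupp.mapDomain (b :: ·) (starW (Finsupp.mapDomain (a :: ·) F) w) +
      Finsupp.mapDomain ((a * b) :: ·) (starW F w) := by
  rw [starW_mapDomain, starW_mapDomain]
  unfold starW
  simp only [qsh_cons, smul_add, Finsupp.sum_add, ← Finsupp.mapDomain_smul,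
    ← Finsupp.mapDomain_sum]

theorem wStar_cons_mapDomain (a b : A) (u : List A) (F : List A →₀ ℚ) :
    wStar (a :: u) (Finsupp.mapDomain (b :: ·) F) =
      Finsupp.mapDomain (a :: ·) (wStar u (Finsupp.mapDomain (b :: ·) F)) +
      Finsupp.mapDomain (b :: ·) (wStar (a :: u) F) +
      Finsupp.mapDomain ((a * b) :: ·) (wStar u F) := by
  rw [wStar_mapDomain, wStar_mapDomain]
  unfold wStar
  simp only [qsh_cons, smul_add, Finsupp.sum_add, ← Finsupp.mapDomain_smul,
    ← Finsupp.mapDomain_sum]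

end WordLevel

/-- Associativity of the quasi-shuffle product at the level of words:
`(u ⋆ v) ⋆ w = u ⋆ (v ⋆ w)`. -/
theorem qsh_assoc {A : Type*} [CommSemigroup A] :
    ∀ u v w : List A, starW (qsh u v) w = wStar u (qsh v w)
  | [], v, w => by rw [qsh_nil_left, starW_single, one_smul, wStar_nil]
  | u, v, [] => by rw [starW_nil, qsh_nil_right, wStar_single, one_smul]
  | a :: u, [], c :: w => by
      rw [qsh_nil_right, starW_single, one_smul, qsh_nil_left, wStar_single, one_smul]
  | a :: u, b :: v, c :: w => by
      have L : starW (qsh (a :: u) (b :: v)) (c :: w) =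
          Finsupp.mapDomain (a :: ·) (starW (qsh u (b :: v)) (c :: w)) +
          Finsupp.mapDomain (b :: ·) (starW (qsh (a :: u) v) (c :: w)) +
          Finsupp.mapDomain ((a * b) :: ·) (starW (qsh u v) (c :: w)) +
          Finsupp.mapDomain (c :: ·) (starW (qsh (a :: u) (b :: v)) w) +
          Finsupp.mapDomain ((a * c) :: ·) (starW (qsh u (b :: v)) w) +
          Finsupp.mapDomain ((b * c) :: ·) (starW (qsh (a :: u) v) w) +
          Finsupp.mapDomain ((a * b * c) :: ·) (starW (qsh u v) w) := by
        conv_lhs => rw [qsh_cons, starW_add, starW_add, starW_mapDomain_cons,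
          starW_mapDomain_cons, starW_mapDomain_cons]
        conv_rhs => rw [qsh_cons a b u v, starW_add, starW_add,
          Finsupp.mapDomain_add, Finsupp.mapDomain_add]
        abel
      have R : wStar (a :: u) (qsh (b :: v) (c :: w)) =
          Finsupp.mapDomain (a :: ·) (wStar u (qsh (b :: v) (c :: w))) +
          Finsupp.mapDomain (b :: ·) (wStar (a :: u) (qsh v (c :: w))) +
          Finsupp.mapDomain ((a * b) :: ·) (wStar u (qsh v (c :: w))) +
          Finsupp.mapDomain (c :: ·) (wStar (a :: u) (qsh (b :: v) w)) +
          Finsupp.mapDomain ((a * c) :: ·) (wStar u (qsh (b :: v) w)) +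
          Finsupp.mapDomain ((b * c) :: ·) (wStar (a :: u) (qsh v w)) +
          Finsupp.mapDomain ((a * (b * c)) :: ·) (wStar u (qsh v w)) := by
        conv_lhs => rw [qsh_cons, wStar_add, wStar_add, wStar_cons_mapDomain,
          wStar_cons_mapDomain, wStar_cons_mapDomain]
        conv_rhs => rw [qsh_cons b c v w, wStar_add, wStar_add,
          Finsupp.mapDomain_add, Finsupp.mapDomain_add]
        abel
      rw [L, R, qsh_assoc u (b :: v) (c :: w), qsh_assoc (a :: u) v (c :: w),
        qsh_assoc u v (c :: w), qsh_assoc (a :: u) (b :: v) w, qsh_assoc u (b :: v) w,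
        qsh_assoc (a :: u) v w, qsh_assoc u v w, mul_assoc]
  termination_by u v w => u.length + v.length + w.length

section Bilinear

variable {A : Type*} [Mul A]

theorem qshStar_zero_left (g : List A →₀ ℚ) : qshStar 0 g = 0 := by
  simp [qshStar]

theorem qshStar_zero_right (f : List A →₀ ℚ) : qshStar f 0 = 0 := by
  simp [qshStar]

theorem qshStar_add_left (f f' g : List A →₀ ℚ) :
    qshStar (f + f') g = qshStar f g + qshStar f' g := by
  unfold qshStar
  refine Finsupp.sum_add_index' (fun u => by simp) (fun u c c' => ?_)
  rw [← Finsupp.sum_add]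
  exact Finsupp.sum_congr fun v _ => by rw [add_mul, add_smul]

theorem qshStar_add_right (f g g' : List A →₀ ℚ) :
    qshStar f (g + g') = qshStar f g + qshStar f g' := by
  unfold qshStar
  rw [← Finsupp.sum_add]
  exact Finsupp.sum_congr fun u _ =>
    Finsupp.sum_add_index' (fun v => by simp) (fun v d d' => by rw [mul_add, add_smul])

theorem qshStar_smul_left (s : ℚ) (f g : List A →₀ ℚ) :
    qshStar (s • f) g = s • qshStar f g := by
  unfold qshStar
  rw [Finsupp.sum_smul_index (fun u => by simp), Finsupp.smul_sum]
  refine Finsupp.sum_congr fun u _ => ?_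
  rw [Finsupp.smul_sum]
  exact Finsupp.sum_congr fun v _ => by rw [mul_assoc, mul_smul]

theorem qshStar_smul_right (s : ℚ) (f g : List A →₀ ℚ) :
    qshStar f (s • g) = s • qshStar f g := by
  unfold qshStar
  rw [Finsupp.smul_sum]
  refine Finsupp.sum_congr fun u _ => ?_
  rw [Finsupp.sum_smul_index (fun v => by simp), Finsupp.smul_sum]
  exact Finsupp.sum_congr fun v _ => by rw [smul_smul]; ring_nf

theorem qshStar_single_single (u v : List A) (c d : ℚ) :
    qshStar (Finsupp.single u c) (Finsupp.single v d) = (c * d) • qsh u v := by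
  unfold qshStar
  rw [Finsupp.sum_single_index (by simp), Finsupp.sum_single_index (by simp)]

theorem qshStar_single_right (f : List A →₀ ℚ) (w : List A) (e : ℚ) :
    qshStar f (Finsupp.single w e) = e • starW f w := by
  unfold qshStar starW
  rw [Finsupp.smul_sum]
  refine Finsupp.sum_congr fun u _ => ?_
  rw [Finsupp.sum_single_index (by simp), smul_smul, mul_comm]

theorem qshStar_single_left (u : List A) (c : ℚ) (g : List A →₀ ℚ) :
    qshStar (Finsupp.single u c) g = c • wStar u g := by
  unfold qshStar wStar
  rw [Finsupp.sum_single_index (by simp), Finsupp.smul_sum]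
  exact Finsupp.sum_congr fun v _ => by rw [mul_smul]

end Bilinear

section Assoc

variable {A : Type*} [CommSemigroup A]

theorem qshStar_assoc_sss (u v w : List A) (c d e : ℚ) :
    qshStar (qshStar (Finsupp.single u c) (Finsupp.single v d)) (Finsupp.single w e) =
      qshStar (Finsupp.single u c) (qshStar (Finsupp.single v d) (Finsupp.single w e)) := by
  rw [qshStar_single_single, qshStar_single_single, qshStar_smul_left, qshStar_smul_right,
    qshStar_single_right, qshStar_single_left, qsh_assoc, smul_smul, smul_smul]
  congr 1
  ring

theorem qshStar_assoc_ssh (u v : List A) (c d : ℚ) (h : List A →₀ ℚ) :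
    qshStar (qshStar (Finsupp.single u c) (Finsupp.single v d)) h =
      qshStar (Finsupp.single u c) (qshStar (Finsupp.single v d) h) := by
  induction h using Finsupp.induction with
  | zero => rw [qshStar_zero_right, qshStar_zero_right, qshStar_zero_right]
  | single_add w e h' _ _ ih =>
      rw [qshStar_add_right, qshStar_add_right, qshStar_add_right, ih, qshStar_assoc_sss]

theorem qshStar_assoc_sgh (u : List A) (c : ℚ) (g h : List A →₀ ℚ) :
    qshStar (qshStar (Finsupp.single u c) g) h =
      qshStar (Finsupp.single u c) (qshStar g h) := by
  induction g using Finsupp.induction with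
  | zero => simp [qshStar_zero_left, qshStar_zero_right]
  | single_add v d g' _ _ ih =>
      rw [qshStar_add_right, qshStar_add_left, qshStar_add_left, qshStar_add_right, ih,
        qshStar_assoc_ssh]

end Assoc

/-- For a commutative semigroup alphabet `A`, the quasi-shuffle product on the free
`ℚ`-vector space on words over `A` is associative. -/
theorem qshStar_assoc {A : Type*} [CommSemigroup A] (f g h : List A →₀ ℚ) :
    qshStar (qshStar f g) h = qshStar f (qshStar g h) := by
  induction f using Finsupp.induction with
  | zero => rw [qshStar_zero_left, qshStar_zero_left, qshStar_zero_left]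
  | single_add u c f' _ _ ih =>
      rw [qshStar_add_left, qshStar_add_left, qshStar_add_left, ih, qshStar_assoc_sgh]
end

section
/- Let x0,…,x_{m+1} be m+2 distinct lines (1-dimensional subspaces) l_0,…,l_{m+1} in a 2-dimensional symplectic vector space (V, ω) over a field of characteristic 0. Define E = Ker(⊕_{i=0}^{m+1} l_i → V) (the summation map) with quadratic form q(v) = Σ_{0≤i<j≤m+1} ω(v_i, v_j) for v = (v_0,…,v_{m+1}) ∈ E. For 0 ≤ i < j ≤ m+1, let E_I ⊆ E be the subspace of vectors supported on indices in I = {0,…,i, j,…,m+1} and E_{I'} the subspace supported on I' = {i, i+1,…, j}. Then E = E_I ⊕ E_{I'} and the two subspaces are orthogonal with respect to the bilinear form associated to q. -/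
open Module

variable (K : Type*) [Field K] (V : Type*) [AddCommGroup V] [Module K V]

/-- The linear map `(v_0,…,v_{n-1}) ↦ Σ_i v_i`. -/
noncomputable def sumProj (n : ℕ) : (Fin n → V) →ₗ[K] V :=
  ∑ i : Fin n, LinearMap.proj i

/-- `E = Ker(⊕_i l_i → V)`: the subspace of tuples `v` with `v i ∈ l i` for all `i` and
`Σ_i v_i = 0`, realized inside `Fin n → V`. -/
noncomputable def maslovE (n : ℕ) (l : Fin n → Submodule K V) : Submodule K (Fin n → V) :=
  (⨅ i : Fin n, (l i).comap (LinearMap.proj i)) ⊓ LinearMap.ker (sumProj K V n)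

/-- `E_I`: the subspace of `E` of vectors supported on the index set `I`. -/
noncomputable def maslovEI (n : ℕ) (l : Fin n → Submodule K V) (I : Set (Fin n)) :
    Submodule K (Fin n → V) :=
  maslovE K V n l ⊓
    ⨅ i ∈ Iᶜ, LinearMap.ker (LinearMap.proj (R := K) (φ := fun _ : Fin n => V) i)

/-- The symmetric bilinear form associated to the Maslov quadratic form
`q(v) = Σ_{p<q} ω(v_p, v_q)`. -/
noncomputable def maslovB (n : ℕ) (ω : V →ₗ[K] V →ₗ[K] K) (v w : Fin n → V) : K :=
  (2 : K)⁻¹ * ∑ q : Fin n, ∑ p ∈ Finset.Iio q, (ω (v p) (w q) + ω (w p) (v q))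


section Helpers

variable {K V}

lemma mem_maslovE' {n : ℕ} {l : Fin n → Submodule K V} {v : Fin n → V} :
    v ∈ maslovE K V n l ↔ (∀ k, v k ∈ l k) ∧ ∑ k, v k = 0 := by
  simp [maslovE, sumProj, Submodule.mem_iInf, LinearMap.mem_ker, LinearMap.sum_apply]

lemma mem_maslovEI' {n : ℕ} {l : Fin n → Submodule K V} {I : Set (Fin n)} {v : Fin n → V} :
    v ∈ maslovEI K V n l I ↔ v ∈ maslovE K V n l ∧ ∀ k, k ∉ I → v k = 0 := by
  simp [maslovEI, Submodule.mem_iInf, LinearMap.mem_ker]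

lemma lines_inf' [FiniteDimensional K V] {W W' : Submodule K V} (hW : finrank K W = 1)
    (hW' : finrank K W' = 1) (hne : W ≠ W') : W ⊓ W' = ⊥ := by
  rw [Submodule.eq_bot_iff]
  rintro x ⟨hx1, hx2⟩
  by_contra hx0
  have h1 : (Submodule.span K {x} : Submodule K V) = W := by
    refine Submodule.eq_of_le_of_finrank_le ?_ ?_
    · rwa [Submodule.span_le, Set.singleton_subset_iff]
    · rw [hW, finrank_span_singleton hx0]
  have h2 : (Submodule.span K {x} : Submodule K V) = W' := by
    refine Submodule.eq_of_le_of_finrank_le ?_ ?_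
    · rwa [Submodule.span_le, Set.singleton_subset_iff]
    · rw [hW', finrank_span_singleton hx0]
  exact hne (h1 ▸ h2)

lemma lines_sup' [FiniteDimensional K V] (hdim : finrank K V = 2) {W W' : Submodule K V}
    (hW : finrank K W = 1) (hW' : finrank K W' = 1) (hne : W ≠ W') : W ⊔ W' = ⊤ := by
  apply Submodule.eq_top_of_finrank_eq
  have h := Submodule.finrank_sup_add_finrank_inf_eq W W'
  rw [lines_inf' hW hW' hne, finrank_bot, hW, hW'] at h
  rw [hdim]
  omega

lemma omega_line' [FiniteDimensional K V] (ω : V →ₗ[K] V →ₗ[K] K) (halt : ∀ v : V, ω v v = 0)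
    {W : Submodule K V} (hW : finrank K W = 1) {x y : V} (hx : x ∈ W) (hy : y ∈ W) :
    ω x y = 0 := by
  rcases eq_or_ne x 0 with rfl | hx0
  · simp
  · obtain ⟨c, rfl⟩ : ∃ c : K, y = c • x := by
      have h1 : (Submodule.span K {x} : Submodule K V) = W := by
        refine Submodule.eq_of_le_of_finrank_le ?_ ?_
        · rwa [Submodule.span_le, Set.singleton_subset_iff]
        · rw [hW, finrank_span_singleton hx0]
      rw [← h1] at hy
      rw [Submodule.mem_span_singleton] at hy
      obtain ⟨c, hc⟩ := hy
      exact ⟨c, hc.symm⟩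
    simp [map_smul, halt]

end Helpers

/-- Let `l_0,…,l_{m+1}` be distinct lines in a 2-dimensional symplectic vector space `(V, ω)`
over a field of characteristic zero, `E = Ker(⊕ l_i → V)` with the Maslov quadratic form
`q(v) = Σ_{i<j} ω(v_i,v_j)`. For `0 ≤ i < j ≤ m+1` let `E_I` and `E_{I'}` be the subspaces of
`E` supported on `I = {0,…,i,j,…,m+1}` and `I' = {i,…,j}`. Then `E = E_I ⊕ E_{I'}` and the two
subspaces are orthogonal for the bilinear form associated to `q`. -/
theorem maslov_orthogonal_decomposition (m : ℕ) [CharZero K]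
    (ω : V →ₗ[K] V →ₗ[K] K)
    (halt : ∀ v : V, ω v v = 0)
    (hnd : ∀ v : V, (∀ w : V, ω v w = 0) → v = 0)
    (hdim : finrank K V = 2)
    (l : Fin (m + 2) → Submodule K V)
    (hl : ∀ i, finrank K (l i) = 1)
    (hld : ∀ i j, i ≠ j → l i ≠ l j)
    (i j : Fin (m + 2)) (hij : i < j) :
    maslovEI K V (m + 2) l {k | k ≤ i ∨ j ≤ k} ⊓
        maslovEI K V (m + 2) l {k | i ≤ k ∧ k ≤ j} = ⊥ ∧
    maslovEI K V (m + 2) l {k | k ≤ i ∨ j ≤ k} ⊔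
        maslovEI K V (m + 2) l {k | i ≤ k ∧ k ≤ j} = maslovE K V (m + 2) l ∧
    ∀ v ∈ maslovEI K V (m + 2) l {k | k ≤ i ∨ j ≤ k},
      ∀ w ∈ maslovEI K V (m + 2) l {k | i ≤ k ∧ k ≤ j},
        maslovB K V (m + 2) ω v w = 0 := by
  haveI : FiniteDimensional K V := FiniteDimensional.of_finrank_eq_succ hdim
  have hlij : l i ≠ l j := hld i j hij.ne
  refine ⟨?_, ?_, ?_⟩
  · -- intersection is ⊥
    rw [Submodule.eq_bot_iff]
    rintro v hv
    rw [Submodule.mem_inf] at hv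
    obtain ⟨h1, h2⟩ := hv
    rw [mem_maslovEI'] at h1 h2
    obtain ⟨hE, hv1⟩ := h1
    obtain ⟨-, hv2⟩ := h2
    obtain ⟨hvl, hvs⟩ := mem_maslovE'.mp hE
    have hzero : ∀ k, k ≠ i → k ≠ j → v k = 0 := by
      intro k hki hkj
      rcases lt_or_ge k i with h | h
      · exact hv2 k (fun hm => absurd hm.1 (not_le.mpr h))
      · rcases lt_or_ge j k with h' | h'
        · exact hv2 k (fun hm => absurd hm.2 (not_le.mpr h'))
        · refine hv1 k ?_
          rintro (hm | hm)
          · exact hki (le_antisymm hm h)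
          · exact hkj (le_antisymm h' hm)
    have hsum : v i + v j = 0 := by
      have h : ∑ k ∈ ({i, j} : Finset (Fin (m + 2))), v k = ∑ k, v k := by
        apply Finset.sum_subset (Finset.subset_univ _)
        intro k _ hk
        simp only [Finset.mem_insert, Finset.mem_singleton, not_or] at hk
        exact hzero k hk.1 hk.2
      rw [Finset.sum_pair hij.ne] at h
      rw [h, hvs]
    have hvi : v i = 0 := by
      have hinf := lines_inf' (hl i) (hl j) hlij
      rw [Submodule.eq_bot_iff] at hinf
      refine hinf _ ⟨hvl i, ?_⟩
      rw [eq_neg_of_add_eq_zero_left hsum]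
      exact neg_mem (hvl j)
    have hvj : v j = 0 := by
      have := hsum
      rw [hvi, zero_add] at this
      exact this
    funext k
    rcases eq_or_ne k i with rfl | h1
    · exact hvi
    rcases eq_or_ne k j with rfl | h2
    · exact hvj
    exact hzero k h1 h2
  · -- sup is E
    apply le_antisymm
    · exact sup_le inf_le_left inf_le_left
    · intro v hv
      obtain ⟨hvl, hvs⟩ := mem_maslovE'.mp hv
      obtain ⟨a, ha, b, hb, hab⟩ := Submodule.mem_sup.mp
        (show (∑ k ∈ Finset.Ioo i j, v k) ∈ l i ⊔ l j by
          rw [lines_sup' hdim (hl i) (hl j) hlij]; exact Submodule.mem_top)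
      set w : Fin (m + 2) → V := fun k => if k = i then -a else if k = j then -b
        else if k ∈ Finset.Ioo i j then v k else 0 with hw
      have hwi : w i = -a := by simp [hw]
      have hwj : w j = -b := by simp [hw, hij.ne']
      have hwmid : ∀ k, k ∈ Finset.Ioo i j → w k = v k := by
        intro k hk
        rw [Finset.mem_Ioo] at hk
        simp only [hw]
        rw [if_neg hk.1.ne', if_neg hk.2.ne, if_pos (Finset.mem_Ioo.mpr hk)]
      have hwout : ∀ k, k ≠ i → k ≠ j → k ∉ Finset.Ioo i j → w k = 0 := by
        intro k h1 h2 h3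
        simp only [hw]
        rw [if_neg h1, if_neg h2, if_neg h3]
      have hwl : ∀ k, w k ∈ l k := by
        intro k
        simp only [hw]
        split_ifs with h1 h2 h3
        · subst h1; exact neg_mem ha
        · subst h2; exact neg_mem hb
        · exact hvl k
        · exact Submodule.zero_mem _
      have hws : ∑ k, w k = 0 := by
        have hsub : ∑ k ∈ insert i (insert j (Finset.Ioo i j)), w k = ∑ k, w k := by
          apply Finset.sum_subset (Finset.subset_univ _)
          intro k _ hk
          simp only [Finset.mem_insert, not_or] at hk
          exact hwout k hk.1 hk.2.1 hk.2.2
        rw [← hsub, Finset.sum_insert (by simp [hij.ne, hij]),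
          Finset.sum_insert (by simp), hwi, hwj,
          Finset.sum_congr rfl hwmid, ← hab]
        abel
      have hwmem : w ∈ maslovEI K V (m + 2) l {k | i ≤ k ∧ k ≤ j} := by
        rw [mem_maslovEI']
        refine ⟨mem_maslovE'.mpr ⟨hwl, hws⟩, ?_⟩
        intro k hk
        have hk' : k < i ∨ j < k := by
          by_contra h
          push_neg at h
          exact hk ⟨h.1, h.2⟩
        have h1 : k ≠ i := by rcases hk' with h | h; exacts [h.ne, (hij.trans h).ne']
        have h2 : k ≠ j := by rcases hk' with h | h; exacts [(h.trans hij).ne, h.ne']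
        have h3 : k ∉ Finset.Ioo i j := by
          intro hm
          rw [Finset.mem_Ioo] at hm
          rcases hk' with h | h
          · exact absurd hm.1 (lt_asymm h)
          · exact absurd hm.2 (lt_asymm h)
        exact hwout k h1 h2 h3
      refine Submodule.mem_sup.mpr ⟨v - w, ?_, w, hwmem, by abel⟩
      rw [mem_maslovEI']
      constructor
      · rw [mem_maslovE']
        constructor
        · intro k
          exact Submodule.sub_mem _ (hvl k) (hwl k)
        · simp only [Pi.sub_apply]
          rw [Finset.sum_sub_distrib, hvs, hws, sub_zero]
      · intro k hk
        have hk' : i < k ∧ k < j := by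
          by_contra h
          push_neg at h
          refine hk ?_
          rcases lt_or_ge i k with h1 | h1
          · exact Or.inr (h h1)
          · exact Or.inl h1
        have : w k = v k := hwmid k (Finset.mem_Ioo.mpr hk')
        simp [Pi.sub_apply, this]
  · -- orthogonality
    intro v hv w hw
    obtain ⟨hvE, hvI⟩ := mem_maslovEI'.mp hv
    obtain ⟨hvl, hvs⟩ := mem_maslovE'.mp hvE
    obtain ⟨hwE, hwI⟩ := mem_maslovEI'.mp hw
    obtain ⟨hwl, hws⟩ := mem_maslovE'.mp hwE
    have hv0 : ∀ k, i < k → k < j → v k = 0 := by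
      intro k h1 h2
      refine hvI k ?_
      rintro (h | h)
      · exact absurd h (not_le.mpr h1)
      · exact absurd h (not_le.mpr h2)
    have hw0 : ∀ k, k < i ∨ j < k → w k = 0 := by
      intro k hk
      refine hwI k ?_
      rintro ⟨h1, h2⟩
      rcases hk with h | h
      · exact absurd h1 (not_le.mpr h)
      · exact absurd h2 (not_le.mpr h)
    have hT1 : ∑ q : Fin (m + 2), ∑ p ∈ Finset.Iio q, ω (v p) (w q) = 0 := by
      have hswap : (∑ q : Fin (m + 2), ∑ p ∈ Finset.Iio q, ω (v p) (w q))
          = ∑ p : Fin (m + 2), ∑ q ∈ Finset.Ioi p, ω (v p) (w q) :=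
        Finset.sum_comm' (fun q p => by simp [Finset.mem_Iio, Finset.mem_Ioi])
      rw [hswap]
      apply Finset.sum_eq_zero
      intro p _
      rcases lt_or_ge p i with hpi | hpi
      · rw [← map_sum (ω (v p)),
          Finset.sum_subset (Finset.subset_univ (Finset.Ioi p)) (fun q _ hq =>
            hw0 q (Or.inl (lt_of_le_of_lt (by simpa [Finset.mem_Ioi, not_lt] using hq) hpi))),
          hws, map_zero]
      · rcases eq_or_lt_of_le hpi with heq | hilt
        · obtain rfl := heq
          have h1 : ∑ q ∈ insert i (Finset.Ioi i), w q = ∑ q, w q := by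
            apply Finset.sum_subset (Finset.subset_univ _)
            intro q _ hq
            simp only [Finset.mem_insert, Finset.mem_Ioi, not_or, not_lt] at hq
            exact hw0 q (Or.inl (lt_of_le_of_ne hq.2 hq.1))
          rw [Finset.sum_insert (by simp), hws] at h1
          have h2 : ∑ q ∈ Finset.Ioi i, w q = -w i := eq_neg_of_add_eq_zero_right h1
          rw [← map_sum (ω (v i)), h2, map_neg,
            omega_line' ω halt (hl i) (hvl i) (hwl i), neg_zero]
        · rcases lt_or_ge p j with hpj | hpj
          · rw [Finset.sum_eq_zero]
            intro q _
            rw [hv0 p hilt hpj]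
            simp
          · rw [← map_sum (ω (v p)),
              Finset.sum_eq_zero (fun q hq =>
                hw0 q (Or.inr (lt_of_le_of_lt hpj (Finset.mem_Ioi.mp hq)))), map_zero]
    have hT2 : ∑ q : Fin (m + 2), ∑ p ∈ Finset.Iio q, ω (w p) (v q) = 0 := by
      apply Finset.sum_eq_zero
      intro q _
      have key : ω (∑ p ∈ Finset.Iio q, w p) (v q) = ∑ p ∈ Finset.Iio q, ω (w p) (v q) := by
        rw [map_sum, LinearMap.sum_apply]
      rcases le_or_gt q i with hqi | hqi
      · refine Finset.sum_eq_zero fun p hp => ?_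
        rw [hw0 p (Or.inl (lt_of_lt_of_le (Finset.mem_Iio.mp hp) hqi))]
        simp
      · rcases lt_or_ge q j with hqj | hqj
        · refine Finset.sum_eq_zero fun p _ => ?_
          rw [hv0 q hqi hqj]
          simp
        · rcases eq_or_lt_of_le hqj with heq | hjlt
          · obtain rfl := heq
            have h1 : ∑ p ∈ insert j (Finset.Iio j), w p = ∑ p, w p := by
              apply Finset.sum_subset (Finset.subset_univ _)
              intro p _ hp
              simp only [Finset.mem_insert, Finset.mem_Iio, not_or, not_lt] at hp
              exact hw0 p (Or.inr (lt_of_le_of_ne hp.2 (Ne.symm hp.1)))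
            rw [Finset.sum_insert (by simp), hws] at h1
            have h2 : ∑ p ∈ Finset.Iio j, w p = -w j := eq_neg_of_add_eq_zero_right h1
            rw [← key, h2, map_neg, LinearMap.neg_apply,
              omega_line' ω halt (hl j) (hwl j) (hvl j), neg_zero]
          · rw [← key,
              Finset.sum_subset (Finset.subset_univ (Finset.Iio q)) (fun p _ hp =>
                hw0 p (Or.inr (lt_of_lt_of_le hjlt (by simpa [Finset.mem_Iio, not_lt] using hp)))),
              hws]
            simp
    unfold maslovB
    have hsplit : ∑ q : Fin (m + 2), ∑ p ∈ Finset.Iio q, (ω (v p) (w q) + ω (w p) (v q))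
        = (∑ q : Fin (m + 2), ∑ p ∈ Finset.Iio q, ω (v p) (w q))
          + ∑ q : Fin (m + 2), ∑ p ∈ Finset.Iio q, ω (w p) (v q) := by
      rw [← Finset.sum_add_distrib]
      exact Finset.sum_congr rfl fun q _ => Finset.sum_add_distrib
    rw [hsplit, hT1, hT2, add_zero, mul_zero]
end

section
/- With V a 2-dimensional symplectic vector space over a field of characteristic zero, and l_0, l_1, l_2 three distinct lines in V spanned by e_0, e_1, e_2 respectively, the kernel E = Ker(l_0 ⊕ l_1 ⊕ l_2 → V) is 1-dimensional, spanned by v = (ω(e_1,e_2)e_0, ω(e_2,e_0)e_1, ω(e_0,e_1)e_2), and the Maslov quadratic form q(v) = Σ_{i<j} ω(v_i,v_j) evaluates to q(v,v) = ω(e_1,e_2)·ω(e_2,e_0)·ω(e_0,e_1). -/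
open Module

variable (K : Type*) [Field K] (V : Type*) [AddCommGroup V] [Module K V]

lemma mem_maslovE_iff (n : ℕ) (l : Fin n → Submodule K V) (u : Fin n → V) :
    u ∈ maslovE K V n l ↔ (∀ i, u i ∈ l i) ∧ ∑ i, u i = 0 := by
  simp [maslovE, sumProj, Submodule.mem_iInf, LinearMap.mem_ker]

/-- Let `(V, ω)` be a 2-dimensional symplectic vector space over a field of characteristic
zero and `l_0, l_1, l_2` three distinct lines spanned by `e_0, e_1, e_2`. Then
`E = Ker(l_0 ⊕ l_1 ⊕ l_2 → V)` is 1-dimensional, spanned by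
`v = (ω(e_1,e_2)e_0, ω(e_2,e_0)e_1, ω(e_0,e_1)e_2)`, and the Maslov quadratic form
`q(v) = Σ_{i<j} ω(v_i,v_j)` evaluates to `q(v,v) = ω(e_1,e_2)·ω(e_2,e_0)·ω(e_0,e_1)`. -/
theorem maslov_three_lines [CharZero K]
    (ω : V →ₗ[K] V →ₗ[K] K)
    (halt : ∀ v : V, ω v v = 0)
    (hnd : ∀ v : V, (∀ w : V, ω v w = 0) → v = 0)
    (hdim : finrank K V = 2)
    (e : Fin 3 → V) (he : ∀ i, e i ≠ 0)
    (hld : ∀ i j : Fin 3, i ≠ j →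
      Submodule.span K {e i} ≠ Submodule.span K {e j}) :
    finrank K (maslovE K V 3 fun i => Submodule.span K {e i}) = 1 ∧
    maslovE K V 3 (fun i => Submodule.span K {e i}) =
      Submodule.span K
        {(![ω (e 1) (e 2) • e 0, ω (e 2) (e 0) • e 1, ω (e 0) (e 1) • e 2] : Fin 3 → V)} ∧
    (fun v : Fin 3 → V => ω (v 0) (v 1) + ω (v 0) (v 2) + ω (v 1) (v 2))
        ![ω (e 1) (e 2) • e 0, ω (e 2) (e 0) • e 1, ω (e 0) (e 1) • e 2] =
      ω (e 1) (e 2) * (ω (e 2) (e 0) * ω (e 0) (e 1)) := by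
  have hFD : FiniteDimensional K V := .of_finrank_eq_succ hdim
  -- skew symmetry
  have hskew : ∀ u w : V, ω u w = - ω w u := by
    intro u w
    have h := halt (u + w)
    simp only [map_add, LinearMap.add_apply, halt] at h
    linear_combination h
  -- linearly independent pairs span everything
  have hspan_top : ∀ x y : V, LinearIndependent K ![x, y] →
      Submodule.span K {x, y} = ⊤ := by
    intro x y h
    apply Submodule.eq_top_of_finrank_eq
    have h2 := finrank_span_eq_card h
    have hr : Set.range ![x, y] = {x, y} := by
      simp only [Matrix.range_cons, Matrix.range_empty, Set.union_empty,
        Set.union_singleton]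
      exact Set.pair_comm y x
    rw [hr] at h2
    simp only [Fintype.card_fin] at h2
    rw [h2, hdim]
  -- nondegenerate pairing gives linear independence
  have hli_of : ∀ x y : V, ω x y ≠ 0 → LinearIndependent K ![x, y] := by
    intro x y hxy
    rw [LinearIndependent.pair_iff]
    intro s t hst
    have h1 : ω (s • x + t • y) y = 0 := by rw [hst]; simp
    have h2 : ω x (s • x + t • y) = 0 := by rw [hst]; simp
    simp only [map_add, map_smul, LinearMap.add_apply, LinearMap.smul_apply,
      smul_eq_mul, halt, mul_zero, add_zero, zero_add] at h1 h2
    exact ⟨by rcases mul_eq_zero.mp h1 with h | h; exact h; exact absurd h hxy,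
      by rcases mul_eq_zero.mp h2 with h | h; exact h; exact absurd h hxy⟩
  -- the pairings between distinct lines are nonzero
  have hpair : ∀ i j : Fin 3, i ≠ j → ω (e i) (e j) ≠ 0 := by
    intro i j hij h0
    have hli : LinearIndependent K ![e i, e j] := by
      rw [LinearIndependent.pair_iff]
      intro s t hst
      by_cases ht : t = 0
      · subst ht
        simp only [zero_smul, add_zero] at hst
        rcases smul_eq_zero.mp hst with hs | h
        · exact ⟨hs, rfl⟩
        · exact absurd h (he i)
      · exfalso
        have h1 : t • e j = (-s) • e i := by
          rw [neg_smul]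
          exact (neg_eq_of_add_eq_zero_right hst).symm
        by_cases hs : s = 0
        · subst hs
          simp only [neg_zero, zero_smul] at h1
          exact he j (by rwa [smul_eq_zero_iff_right ht] at h1)
        · apply hld j i (Ne.symm hij)
          have h2 : e j = (t⁻¹ * -s) • e i := by
            rw [mul_smul, eq_inv_smul_iff₀ ht, h1]
          rw [h2, Submodule.span_singleton_smul_eq]
          exact isUnit_iff_ne_zero.mpr (by
            simp only [ne_eq, mul_eq_zero, inv_eq_zero, neg_eq_zero, not_or]
            exact ⟨ht, hs⟩)
    have htop := hspan_top (e i) (e j) hli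
    refine he i (hnd _ fun w => ?_)
    have hw : w ∈ Submodule.span K {e i, e j} := htop ▸ Submodule.mem_top
    obtain ⟨a, b, rfl⟩ := Submodule.mem_span_pair.mp hw
    simp [map_add, map_smul, halt, h0, smul_eq_mul]
  have ha : ω (e 1) (e 2) ≠ 0 := hpair 1 2 (by decide)
  have hb : ω (e 2) (e 0) ≠ 0 := hpair 2 0 (by decide)
  have hc : ω (e 0) (e 1) ≠ 0 := hpair 0 1 (by decide)
  have h10 : ω (e 1) (e 0) = - ω (e 0) (e 1) := hskew _ _
  have h21 : ω (e 2) (e 1) = - ω (e 1) (e 2) := hskew _ _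
  have h02 : ω (e 0) (e 2) = - ω (e 2) (e 0) := hskew _ _
  set a := ω (e 1) (e 2) with ha_def
  set b := ω (e 2) (e 0) with hb_def
  set c := ω (e 0) (e 1) with hc_def
  -- the sum of the components of v vanishes
  have hsum : a • e 0 + b • e 1 + c • e 2 = 0 := by
    apply hnd
    intro w
    have hw : w ∈ Submodule.span K {e 0, e 1} :=
      (hspan_top (e 0) (e 1) (hli_of _ _ hc)) ▸ Submodule.mem_top
    obtain ⟨p, q, rfl⟩ := Submodule.mem_span_pair.mp hw
    simp only [map_add, map_smul, LinearMap.add_apply, LinearMap.smul_apply,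
      smul_eq_mul, halt, h10, h21, ← ha_def, ← hb_def, ← hc_def]
    ring
  set v : Fin 3 → V := ![a • e 0, b • e 1, c • e 2] with hv_def
  -- v lies in E
  have hvE : v ∈ maslovE K V 3 (fun i => Submodule.span K {e i}) := by
    rw [mem_maslovE_iff]
    constructor
    · intro i
      fin_cases i <;>
        simp only [hv_def, Matrix.cons_val_zero, Matrix.cons_val_one, Matrix.head_cons,
          Matrix.cons_val_two, Matrix.tail_cons, Fin.isValue] <;>
        exact Submodule.smul_mem _ _ (Submodule.mem_span_singleton_self _)
    · rw [Fin.sum_univ_three]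
      simpa [hv_def] using hsum
  -- E is contained in the span of v
  have hle : maslovE K V 3 (fun i => Submodule.span K {e i}) ≤ Submodule.span K {v} := by
    intro u hu
    rw [mem_maslovE_iff] at hu
    obtain ⟨hcomp, hsum0⟩ := hu
    obtain ⟨t0, h0⟩ := Submodule.mem_span_singleton.mp (hcomp 0)
    obtain ⟨t1, h1⟩ := Submodule.mem_span_singleton.mp (hcomp 1)
    obtain ⟨t2, h2⟩ := Submodule.mem_span_singleton.mp (hcomp 2)
    rw [Fin.sum_univ_three, ← h0, ← h1, ← h2] at hsum0
    have key2 : t0 * ω (e 0) (e 2) + t1 * a = 0 := by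
      have := congrArg (fun x => ω x (e 2)) hsum0
      simpa [map_add, map_smul, smul_eq_mul, halt, ← ha_def] using this
    have key1 : t0 * c + t2 * ω (e 2) (e 1) = 0 := by
      have := congrArg (fun x => ω x (e 1)) hsum0
      simpa [map_add, map_smul, smul_eq_mul, halt, ← hc_def] using this
    rw [h02] at key2
    rw [h21] at key1
    -- relations: t1 * a = t0 * b and t2 * a = t0 * c
    have rel1 : t1 * a = t0 * b := by linear_combination key2
    have rel2 : t2 * a = t0 * c := by linear_combination -key1
    refine Submodule.mem_span_singleton.mpr ⟨t0 / a, ?_⟩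
    funext i
    fin_cases i
    · show (t0 / a) • v 0 = u 0
      rw [hv_def]
      simp only [Matrix.cons_val_zero]
      rw [smul_smul, div_mul_cancel₀ _ ha, h0]
    · show (t0 / a) • v 1 = u 1
      rw [hv_def]
      simp only [Matrix.cons_val_one, Matrix.head_cons, Matrix.cons_val_zero]
      rw [smul_smul, show t0 / a * b = t1 by field_simp; linear_combination -rel1, h1]
    · show (t0 / a) • v 2 = u 2
      rw [hv_def]
      simp only [Matrix.cons_val_two, Matrix.tail_cons, Matrix.head_cons]
      rw [smul_smul, show t0 / a * c = t2 by field_simp; linear_combination -rel2, h2]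
  have hEeq : maslovE K V 3 (fun i => Submodule.span K {e i}) = Submodule.span K {v} :=
    le_antisymm hle (Submodule.span_le.mpr (Set.singleton_subset_iff.mpr hvE))
  have hvne : v ≠ 0 := by
    intro h
    apply smul_ne_zero ha (he 0)
    have := congrFun h 0
    simpa [hv_def] using this
  refine ⟨?_, hEeq, ?_⟩
  · rw [show (maslovE K V 3 fun i => Submodule.span K {e i}) =
        maslovE K V 3 (fun i => Submodule.span K {e i}) from rfl, hEeq]
    exact finrank_span_singleton hvne
  · simp only [hv_def, Matrix.cons_val_zero, Matrix.cons_val_one, Matrix.head_cons,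
      Matrix.cons_val_two, Matrix.tail_cons, map_smul, LinearMap.smul_apply, smul_eq_mul,
      h02, ← ha_def, ← hb_def, ← hc_def]
    ring
end

section
/- Let E be a vector space carrying the Maslov quadratic form associated to m+2 distinct lines l_0,…,l_{m+1} in a 2-dimensional symplectic vector space. For distinct triples {i1,i2,i3} and {j1,j2,j3} of indices, if the corresponding triangles in a convex (m+2)-gon (with vertices labeled 0,…,m+1 in cyclic order) have disjoint interiors, then the lines E_{i1,i2,i3} and E_{j1,j2,j3} in E are orthogonal with respect to the Maslov form. -/
open Module

variable (K : Type*) [Field K] (V : Type*) [AddCommGroup V] [Module K V]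

/-- Two triangles inscribed in the convex `(m+2)`-gon with vertices `0,…,m+1` in cyclic order,
given by vertex sets `S` and `T`, have disjoint interiors: some chord `{i,j}` separates them,
one triangle lying in the interval `[i,j]`, the other in the complementary cyclic interval. -/
def TrianglesDisjoint (m : ℕ) (S T : Finset (Fin (m + 2))) : Prop :=
  ∃ i j : Fin (m + 2), i ≤ j ∧
    (((∀ a ∈ S, a ≤ i ∨ j ≤ a) ∧ ∀ b ∈ T, i ≤ b ∧ b ≤ j) ∨
     ((∀ a ∈ T, a ≤ i ∨ j ≤ a) ∧ ∀ b ∈ S, i ≤ b ∧ b ≤ j))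

/-- On a 1-dimensional subspace, an alternating form vanishes identically. -/
lemma line_pair_zero (ω : V →ₗ[K] V →ₗ[K] K) (halt : ∀ v : V, ω v v = 0)
    (W : Submodule K V) (hW : finrank K W = 1) {x y : V} (hx : x ∈ W) (hy : y ∈ W) :
    ω x y = 0 := by
  obtain ⟨z, hz0, hz⟩ := finrank_eq_one_iff'.mp hW
  obtain ⟨a, ha⟩ := hz ⟨x, hx⟩
  obtain ⟨b, hb⟩ := hz ⟨y, hy⟩
  have hx' : x = a • (z : V) := by
    have := congrArg (Subtype.val) ha; simpa using this.symm
  have hy' : y = b • (z : V) := by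
    have := congrArg (Subtype.val) hb; simpa using this.symm
  rw [hx', hy']
  simp [halt]

/-- First half: `Σ_{p<q} ω(v_p, w_q) = 0` when `v` lives outside `[i,j]` and `w` inside. -/
lemma maslov_keyA {n : ℕ} (ω : V →ₗ[K] V →ₗ[K] K) (v w : Fin n → V) (i j : Fin n)
    (hv : ∀ p : Fin n, ¬(p ≤ i ∨ j ≤ p) → v p = 0)
    (hw : ∀ p : Fin n, ¬(i ≤ p ∧ p ≤ j) → w p = 0)
    (hsw : ∑ p : Fin n, w p = 0)
    (hd : ∀ p : Fin n, ω (v p) (w p) = 0) :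
    ∑ q : Fin n, ∑ p ∈ Finset.Iio q, ω (v p) (w q) = 0 := by
  have h1 : ∀ q : Fin n, ∑ p ∈ Finset.Iio q, ω (v p) (w q)
      = ω (∑ p ∈ Finset.Iic i, v p) (w q) := by
    intro q
    by_cases hwq : w q = 0
    · simp [hwq]
    · have hq : i ≤ q ∧ q ≤ j := by
        by_contra h; exact hwq (hw q h)
      rcases eq_or_lt_of_le hq.1 with h | h
      · subst h
        rw [← Finset.Iio_insert, Finset.sum_insert (by simp), map_add,
          LinearMap.add_apply, hd, zero_add, map_sum, LinearMap.sum_apply]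
      · rw [map_sum, LinearMap.sum_apply]
        refine (Finset.sum_subset ?_ ?_).symm
        · intro p hp
          simp only [Finset.mem_Iic] at hp
          simp only [Finset.mem_Iio]
          exact lt_of_le_of_lt hp h
        · intro p hp hpi
          simp only [Finset.mem_Iio] at hp
          simp only [Finset.mem_Iic, not_le] at hpi
          have : v p = 0 := hv p (by
            push_neg
            exact ⟨hpi, lt_of_lt_of_le hp hq.2⟩)
          simp [this]
  calc ∑ q : Fin n, ∑ p ∈ Finset.Iio q, ω (v p) (w q)
      = ∑ q : Fin n, ω (∑ p ∈ Finset.Iic i, v p) (w q) := Finset.sum_congr rfl fun q _ => h1 q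
    _ = ω (∑ p ∈ Finset.Iic i, v p) (∑ q : Fin n, w q) := (map_sum _ _ _).symm
    _ = 0 := by rw [hsw, map_zero]

/-- Second half: `Σ_{p<q} ω(w_p, v_q) = 0`, termwise in `q`. -/
lemma maslov_keyC {n : ℕ} (ω : V →ₗ[K] V →ₗ[K] K) (v w : Fin n → V) (i j : Fin n)
    (hv : ∀ p : Fin n, ¬(p ≤ i ∨ j ≤ p) → v p = 0)
    (hw : ∀ p : Fin n, ¬(i ≤ p ∧ p ≤ j) → w p = 0)
    (hsw : ∑ p : Fin n, w p = 0)
    (hd' : ∀ p : Fin n, ω (w p) (v p) = 0) :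
    ∑ q : Fin n, ∑ p ∈ Finset.Iio q, ω (w p) (v q) = 0 := by
  refine Finset.sum_eq_zero fun q _ => ?_
  by_cases hvq : v q = 0
  · simp [hvq]
  have hq : q ≤ i ∨ j ≤ q := by
    by_contra h; exact hvq (hv q h)
  rcases hq with h | h
  · refine Finset.sum_eq_zero fun p hp => ?_
    simp only [Finset.mem_Iio] at hp
    have : w p = 0 := hw p (by
      push_neg
      intro hip
      exact absurd (lt_of_lt_of_le hp h) (not_lt.mpr hip))
    simp [this]
  · have hIci : ∑ p ∈ Finset.Ici q, w p = w q := by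
      rw [← Finset.Ioi_insert, Finset.sum_insert (by simp)]
      have hz : ∑ p ∈ Finset.Ioi q, w p = 0 := by
        refine Finset.sum_eq_zero fun p hp => ?_
        simp only [Finset.mem_Ioi] at hp
        exact hw p (by
          push_neg
          intro _
          exact lt_of_le_of_lt h hp)
      rw [hz, add_zero]
    have hsplit : ∑ p ∈ Finset.Iio q, w p + ∑ p ∈ Finset.Ici q, w p = ∑ p : Fin n, w p := by
      rw [← Finset.sum_union]
      · congr 1; ext x; simp [lt_or_ge]
      · simp [Finset.disjoint_left]
    have hIio : ∑ p ∈ Finset.Iio q, w p = -(w q) := by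
      rw [hIci, hsw] at hsplit
      exact eq_neg_of_add_eq_zero_left hsplit
    rw [← LinearMap.sum_apply, ← map_sum, hIio, map_neg, LinearMap.neg_apply, hd', neg_zero]

/-- Let `E` carry the Maslov quadratic form associated to `m+2` distinct lines `l_0,…,l_{m+1}`
in a 2-dimensional symplectic vector space `(V, ω)`. For distinct triples `S = {i1,i2,i3}` and
`T = {j1,j2,j3}` of indices whose corresponding inscribed triangles in a convex `(m+2)`-gon
have disjoint interiors, the subspaces `E_S = E_{i1,i2,i3}` and `E_T = E_{j1,j2,j3}` of `E`
are orthogonal with respect to the Maslov form. -/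
theorem maslov_disjoint_triangles_orthogonal (m : ℕ) [CharZero K]
    (ω : V →ₗ[K] V →ₗ[K] K)
    (halt : ∀ v : V, ω v v = 0)
    (hnd : ∀ v : V, (∀ w : V, ω v w = 0) → v = 0)
    (hdim : finrank K V = 2)
    (l : Fin (m + 2) → Submodule K V)
    (hl : ∀ i, finrank K (l i) = 1)
    (hld : ∀ i j, i ≠ j → l i ≠ l j)
    (S T : Finset (Fin (m + 2))) (hS : S.card = 3) (hT : T.card = 3) (hST : S ≠ T)
    (hdisj : TrianglesDisjoint m S T) :
    ∀ v ∈ maslovEI K V (m + 2) l (S : Set (Fin (m + 2))),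
      ∀ w ∈ maslovEI K V (m + 2) l (T : Set (Fin (m + 2))),
        maslovB K V (m + 2) ω v w = 0 := by
  intro v hv w hw
  rw [maslovEI, Submodule.mem_inf, maslovE, Submodule.mem_inf] at hv hw
  obtain ⟨⟨hvl, hvker⟩, hvsupp⟩ := hv
  obtain ⟨⟨hwl, hwker⟩, hwsupp⟩ := hw
  simp only [Submodule.mem_iInf, Submodule.mem_comap, LinearMap.proj_apply] at hvl hwl
  have hvsum : ∑ p : Fin (m + 2), v p = 0 := by
    have := LinearMap.mem_ker.mp hvker
    simpa [sumProj, LinearMap.sum_apply] using this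
  have hwsum : ∑ p : Fin (m + 2), w p = 0 := by
    have := LinearMap.mem_ker.mp hwker
    simpa [sumProj, LinearMap.sum_apply] using this
  have hvsupp' : ∀ p : Fin (m + 2), p ∉ S → v p = 0 := by
    intro p hp
    simp only [Submodule.mem_iInf] at hvsupp
    have := hvsupp p (by simpa using hp)
    simpa using LinearMap.mem_ker.mp this
  have hwsupp' : ∀ p : Fin (m + 2), p ∉ T → w p = 0 := by
    intro p hp
    simp only [Submodule.mem_iInf] at hwsupp
    have := hwsupp p (by simpa using hp)
    simpa using LinearMap.mem_ker.mp this
  have hd : ∀ p : Fin (m + 2), ω (v p) (w p) = 0 :=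
    fun p => line_pair_zero K V ω halt (l p) (hl p) (hvl p) (hwl p)
  have hd' : ∀ p : Fin (m + 2), ω (w p) (v p) = 0 :=
    fun p => line_pair_zero K V ω halt (l p) (hl p) (hwl p) (hvl p)
  obtain ⟨i, j, hij, hcase⟩ := hdisj
  rw [maslovB]
  rcases hcase with ⟨hSout, hTin⟩ | ⟨hTout, hSin⟩
  · have hv' : ∀ p : Fin (m + 2), ¬(p ≤ i ∨ j ≤ p) → v p = 0 := fun p hp => by
      by_cases h : p ∈ S
      · exact absurd (hSout p h) hp
      · exact hvsupp' p h
    have hw' : ∀ p : Fin (m + 2), ¬(i ≤ p ∧ p ≤ j) → w p = 0 := fun p hp => by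
      by_cases h : p ∈ T
      · exact absurd (hTin p h) hp
      · exact hwsupp' p h
    have hA := maslov_keyA K V ω v w i j hv' hw' hwsum hd
    have hC := maslov_keyC K V ω v w i j hv' hw' hwsum hd'
    simp only [Finset.sum_add_distrib]
    rw [hA, hC, add_zero, mul_zero]
  · have hw'' : ∀ p : Fin (m + 2), ¬(p ≤ i ∨ j ≤ p) → w p = 0 := fun p hp => by
      by_cases h : p ∈ T
      · exact absurd (hTout p h) hp
      · exact hwsupp' p h
    have hv'' : ∀ p : Fin (m + 2), ¬(i ≤ p ∧ p ≤ j) → v p = 0 := fun p hp => by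
      by_cases h : p ∈ S
      · exact absurd (hSin p h) hp
      · exact hvsupp' p h
    have hA := maslov_keyA K V ω w v i j hw'' hv'' hvsum hd'
    have hC := maslov_keyC K V ω w v i j hw'' hv'' hvsum hd
    simp only [Finset.sum_add_distrib]
    rw [hA, hC, add_zero, mul_zero]
end

section
/- For |a1| < 1 and |a2| < 1, the double series Li_{n1,n2}(a1,a2) = Σ_{m1>m2>0} a1^{m1} a2^{m2}/(m1^{n1} m2^{n2}) converges absolutely, and the quasi-shuffle relation Li_{n1,n2}(a1,a2) + Li_{n2,n1}(a2,a1) + Li_{n1+n2}(a1 a2) = Li_{n1}(a1) · Li_{n2}(a2) holds, where Li_n(a) = Σ_{m≥1} a^m/m^n. -/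
/-- The term of the double polylogarithm series `Li_{n1,n2}(a1,a2)`, indexed over `ℕ × ℕ`
and vanishing outside the region `m1 > m2 > 0`. -/
noncomputable def dpolyTerm (n1 n2 : ℕ) (a1 a2 : ℂ) (p : ℕ × ℕ) : ℂ :=
  if p.2 < p.1 ∧ 0 < p.2 then
    a1 ^ p.1 * a2 ^ p.2 / ((p.1 : ℂ) ^ n1 * (p.2 : ℂ) ^ n2)
  else 0

/-- The term of the single polylogarithm series `Li_n(a)`. -/
noncomputable def polyTerm (n : ℕ) (a : ℂ) (m : ℕ) : ℂ :=
  if 0 < m then a ^ m / (m : ℂ) ^ n else 0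

/-- Diagonal term. -/
noncomputable def diagTerm (n : ℕ) (a : ℂ) (p : ℕ × ℕ) : ℂ :=
  if p.1 = p.2 then polyTerm n a p.1 else 0

lemma polyTerm_norm_le (n : ℕ) (a : ℂ) (m : ℕ) : ‖polyTerm n a m‖ ≤ ‖a‖ ^ m := by
  unfold polyTerm
  split
  · next h =>
    rw [norm_div, norm_pow, norm_pow]
    have h1 : (1:ℝ) ≤ ‖(m:ℂ)‖ ^ n := by
      apply one_le_pow₀
      rw [Complex.norm_natCast]
      exact_mod_cast h
    calc ‖a‖ ^ m / ‖(m:ℂ)‖ ^ n ≤ ‖a‖ ^ m / 1 := by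
          apply div_le_div_of_nonneg_left (by positivity) one_pos h1
      _ = ‖a‖ ^ m := by ring
  · simp only [norm_zero]
    positivity

lemma polyTerm_summable_norm (n : ℕ) {a : ℂ} (ha : ‖a‖ < 1) :
    Summable fun m => ‖polyTerm n a m‖ :=
  Summable.of_nonneg_of_le (fun _ => norm_nonneg _) (polyTerm_norm_le n a)
    (summable_geometric_of_lt_one (norm_nonneg a) ha)

lemma dpolyTerm_norm_le (n1 n2 : ℕ) (a1 a2 : ℂ) (p : ℕ × ℕ) :
    ‖dpolyTerm n1 n2 a1 a2 p‖ ≤ ‖polyTerm n1 a1 p.1‖ * ‖polyTerm n2 a2 p.2‖ := by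
  unfold dpolyTerm polyTerm
  split
  · next h =>
    rw [if_pos (h.2.trans h.1), if_pos h.2, ← norm_mul]
    apply le_of_eq
    congr 1
    field_simp
  · simp only [norm_zero]
    positivity

lemma dpolyTerm_summable_norm (n1 n2 : ℕ) {a1 a2 : ℂ} (ha1 : ‖a1‖ < 1) (ha2 : ‖a2‖ < 1) :
    Summable fun p : ℕ × ℕ => ‖dpolyTerm n1 n2 a1 a2 p‖ := by
  have hmul : Summable fun p : ℕ × ℕ => ‖polyTerm n1 a1 p.1‖ * ‖polyTerm n2 a2 p.2‖ := by
    apply Summable.mul_of_nonneg (polyTerm_summable_norm n1 ha1) (polyTerm_summable_norm n2 ha2)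
    · intro m; exact norm_nonneg _
    · intro m; exact norm_nonneg _
  exact hmul.of_nonneg_of_le (fun _ => norm_nonneg _) (dpolyTerm_norm_le n1 n2 a1 a2)

lemma diag_supp (n : ℕ) (a : ℂ) :
    ∀ p ∉ Set.range (fun m : ℕ => (m, m)), diagTerm n a p = 0 := by
  rintro ⟨x, y⟩ h
  rw [diagTerm, if_neg]
  intro hxy
  simp only at hxy
  exact h ⟨x, by rw [hxy]⟩

lemma diag_comp (n : ℕ) (a : ℂ) :
    (diagTerm n a ∘ fun m : ℕ => (m, m)) = polyTerm n a := by
  funext m; simp [diagTerm]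

lemma key_pointwise (n1 n2 : ℕ) (a1 a2 : ℂ) (p : ℕ × ℕ) :
    polyTerm n1 a1 p.1 * polyTerm n2 a2 p.2 =
      dpolyTerm n1 n2 a1 a2 p + dpolyTerm n2 n1 a2 a1 p.swap +
        diagTerm (n1 + n2) (a1 * a2) p := by
  obtain ⟨m1, m2⟩ := p
  unfold diagTerm dpolyTerm polyTerm
  simp only [Prod.fst, Prod.snd, Prod.swap]
  rcases Nat.eq_zero_or_pos m1 with h1 | h1
  · subst h1; simp
  rcases Nat.eq_zero_or_pos m2 with h2 | h2
  · subst h2; simp [Nat.pos_iff_ne_zero.mp h1]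
  rcases lt_trichotomy m1 m2 with h | h | h
  · rw [if_pos h1, if_pos h2, if_neg (by omega), if_pos ⟨h, h1⟩, if_neg (by omega)]
    field_simp
    try ring
  · subst h
    rw [if_pos h1, if_pos h1, if_neg (by omega), if_neg (by omega), if_pos rfl, if_pos h1]
    rw [pow_add, mul_pow]
    field_simp
    try ring
  · rw [if_pos h1, if_pos h2, if_pos ⟨h, h2⟩, if_neg (by omega), if_neg (by omega)]
    field_simp
    try ring

set_option maxHeartbeats 1000000 in
/-- For `|a1| < 1`, `|a2| < 1` and positive integers `n1, n2`, the double series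
`Li_{n1,n2}(a1,a2) = Σ_{m1>m2>0} a1^{m1} a2^{m2}/(m1^{n1} m2^{n2})` converges absolutely, and
the quasi-shuffle relation
`Li_{n1,n2}(a1,a2) + Li_{n2,n1}(a2,a1) + Li_{n1+n2}(a1·a2) = Li_{n1}(a1) · Li_{n2}(a2)` holds. -/
theorem double_polylog_summable_and_quasiShuffle (n1 n2 : ℕ) (hn1 : 0 < n1) (hn2 : 0 < n2)
    (a1 a2 : ℂ) (ha1 : ‖a1‖ < 1) (ha2 : ‖a2‖ < 1) :
    (Summable fun p : ℕ × ℕ => ‖dpolyTerm n1 n2 a1 a2 p‖) ∧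
    (∑' p : ℕ × ℕ, dpolyTerm n1 n2 a1 a2 p) + (∑' p : ℕ × ℕ, dpolyTerm n2 n1 a2 a1 p) +
        (∑' m : ℕ, polyTerm (n1 + n2) (a1 * a2) m) =
      (∑' m : ℕ, polyTerm n1 a1 m) * (∑' m : ℕ, polyTerm n2 a2 m) := by
  have ha12 : ‖a1 * a2‖ < 1 := by
    rw [norm_mul]
    nlinarith [norm_nonneg a1, norm_nonneg a2]
  refine ⟨dpolyTerm_summable_norm n1 n2 ha1 ha2, ?_⟩
  have hdiag_inj : Function.Injective (fun m : ℕ => ((m, m) : ℕ × ℕ)) := fun a b h => by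
    simpa using (congrArg Prod.fst h)
  have hA : Summable (dpolyTerm n1 n2 a1 a2) := (dpolyTerm_summable_norm n1 n2 ha1 ha2).of_norm
  have hB' : Summable (dpolyTerm n2 n1 a2 a1) := (dpolyTerm_summable_norm n2 n1 ha2 ha1).of_norm
  have hB : Summable (fun p : ℕ × ℕ => dpolyTerm n2 n1 a2 a1 p.swap) :=
    (Equiv.prodComm ℕ ℕ).summable_iff.mpr hB'
  have hCsum : Summable (diagTerm (n1 + n2) (a1 * a2)) := by
    rw [← hdiag_inj.summable_iff (diag_supp _ _), diag_comp]
    exact (polyTerm_summable_norm (n1 + n2) ha12).of_norm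
  have hCtsum : (∑' m : ℕ, polyTerm (n1 + n2) (a1 * a2) m) =
      ∑' p : ℕ × ℕ, diagTerm (n1 + n2) (a1 * a2) p := by
    rw [← hdiag_inj.tsum_eq (Function.support_subset_iff'.mpr (diag_supp _ _))]
    exact tsum_congr fun m => by simp [diagTerm]
  have hBtsum : (∑' p : ℕ × ℕ, dpolyTerm n2 n1 a2 a1 p) =
      ∑' p : ℕ × ℕ, dpolyTerm n2 n1 a2 a1 p.swap :=
    ((Equiv.prodComm ℕ ℕ).tsum_eq (dpolyTerm n2 n1 a2 a1)).symm
  rw [hCtsum, hBtsum,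
    tsum_mul_tsum_of_summable_norm (polyTerm_summable_norm n1 ha1) (polyTerm_summable_norm n2 ha2),
    ← Summable.tsum_add hA hB, ← Summable.tsum_add (hA.add hB) hCsum]
  exact tsum_congr fun p => (key_pointwise n1 n2 a1 a2 p).symm
end

section
/- In the Connes–Kreimer Hopf algebra of decorated rooted trees, the grafting operator B_a^+ is a Hochschild 1-cocycle: Δ(B_a^+(t)) = (B_a^+ ⊗ id)(Δ(t)) + 1 ⊗ B_a^+(t) for every forest t. -/
/-- Rooted trees with vertices decorated by `A` (a forest of subtrees above the root). -/
inductive PTree (A : Type*) : Type _ where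
  | node : A → List (PTree A) → PTree A

/-- All admissible cuts of a rooted tree `t` (including the empty cut), each recorded as the
pair `(R^c(t), P^c(t))` of the root component and the list of pruned components. An admissible
cut meets each root-to-vertex path at most once; it is obtained by choosing, for every child
subtree, either to cut the edge to it, or an admissible cut of the child. -/
def cuts {A : Type*} : PTree A → List (PTree A × List (PTree A))
  | .node a cs =>
    (cs.attach.foldr
        (fun c acc =>
          ((([], [c.1]) :: (cuts c.1).map fun rp => ([rp.1], rp.2)).flatMap
            fun x => acc.map fun y => (x.1 ++ y.1, x.2 ++ y.2)))
        [([], [])]).map fun rp => (PTree.node a rp.1, rp.2)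
  termination_by t => sizeOf t
  decreasing_by
    have h := List.sizeOf_lt_of_mem c.2
    simp only [PTree.node.sizeOf_spec]
    omega

/-- The Connes–Kreimer coproduct of a single tree, with values in the free `ℚ`-vector space
on pairs of forests (representing the tensor square):
`Δ(t) = 1⊗t + Σ_{c admissible cut} R^c(t) ⊗ P^c(t)` (the term `t⊗1` being the empty cut). -/
noncomputable def deltaTree {A : Type*} (t : PTree A) :
    (List (PTree A) × List (PTree A)) →₀ ℚ :=
  Finsupp.single (([] : List (PTree A)), [t]) 1 +
    ((cuts t).map fun rp => Finsupp.single (([rp.1], rp.2)) (1 : ℚ)).sum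

/-- The Connes–Kreimer coproduct of a forest, extended multiplicatively. -/
noncomputable def deltaForest {A : Type*} : List (PTree A) →
    ((List (PTree A) × List (PTree A)) →₀ ℚ)
  | [] => Finsupp.single (([] : List (PTree A)), ([] : List (PTree A))) 1
  | t :: ts => (deltaTree t).sum fun p c => (deltaForest ts).sum fun q d =>
      (c * d) • Finsupp.single ((p.1 ++ q.1, p.2 ++ q.2)) (1 : ℚ)

section Aux

variable {A : Type*}

/-- The product list of cuts of a forest, as in the `foldr` inside `cuts`. -/
def prodList (f : List (PTree A)) : List (List (PTree A) × List (PTree A)) :=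
  f.foldr
    (fun c acc =>
      ((([], [c]) :: (cuts c).map fun rp => ([rp.1], rp.2)).flatMap
        fun x => acc.map fun y => (x.1 ++ y.1, x.2 ++ y.2)))
    [([], [])]

lemma foldr_attach {α β : Type*} (l : List β) (F : β → α → α) (b : α) :
    l.attach.foldr (fun c acc => F c.1 acc) b = l.foldr F b := by
  conv_rhs => rw [← List.attach_map_subtype_val l]
  rw [List.foldr_map]

lemma cuts_node (a : A) (f : List (PTree A)) :
    cuts (PTree.node a f) = (prodList f).map fun rp => (PTree.node a rp.1, rp.2) := by
  rw [cuts, prodList]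
  congr 1
  exact foldr_attach f
    (fun c acc =>
      ((([], [c]) :: (cuts c).map fun rp => ([rp.1], rp.2)).flatMap
        fun x => acc.map fun y => (x.1 ++ y.1, x.2 ++ y.2)))
    [([], [])]

lemma sum_flatMap' {α M : Type*} [AddCommMonoid M] (L : List α) (g : α → List M) :
    (L.flatMap g).sum = (L.map fun x => (g x).sum).sum := by
  induction L with
  | nil => rfl
  | cons x L ih => simp [List.flatMap_cons, List.sum_append, ih]

lemma sum_singles_sum {α M : Type*} [AddCommMonoid M] (L : List α) (h : α → ℚ → M)
    (h0 : ∀ p, h p 0 = 0) (hadd : ∀ p c d, h p (c + d) = h p c + h p d) :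
    ((L.map fun p => Finsupp.single p (1 : ℚ)).sum).sum h = (L.map fun p => h p 1).sum := by
  induction L with
  | nil => simp [Finsupp.sum_zero_index]
  | cons p L ih =>
    rw [List.map_cons, List.sum_cons, Finsupp.sum_add_index' h0 hadd,
      Finsupp.sum_single_index (h0 p), List.map_cons, List.sum_cons, ih]

lemma deltaTree_eq (t : PTree A) :
    deltaTree t = (((([] : List (PTree A)), [t]) ::
      (cuts t).map fun rp => ([rp.1], rp.2)).map
        fun p => Finsupp.single p (1 : ℚ)).sum := by
  simp only [deltaTree, List.map_cons, List.sum_cons, List.map_map]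
  rfl

lemma deltaForest_eq (f : List (PTree A)) :
    deltaForest f = ((prodList f).map fun rp => Finsupp.single rp (1 : ℚ)).sum := by
  induction f with
  | nil => simp [deltaForest, prodList]
  | cons t ts ih =>
    show (deltaTree t).sum _ = _
    rw [ih, deltaTree_eq]
    set L1 := ((([] : List (PTree A)), [t]) :: (cuts t).map fun rp => ([rp.1], rp.2)) with hL1
    set L2 := prodList ts with hL2
    have hprod : prodList (t :: ts) =
        L1.flatMap fun x => L2.map fun y => (x.1 ++ y.1, x.2 ++ y.2) := rfl
    have key := sum_singles_sum L1
      (fun p c => ((L2.map fun rp => Finsupp.single rp (1 : ℚ)).sum).sum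
        fun q d => (c * d) • Finsupp.single ((p.1 ++ q.1, p.2 ++ q.2)) (1 : ℚ))
      (fun p => by simp [Finsupp.sum])
      (fun p c d => by
        rw [← Finsupp.sum_add]
        congr 1; ext q e
        simp [add_mul, add_smul])
    rw [hprod, key, List.map_flatMap, sum_flatMap']
    refine congrArg List.sum (List.map_congr_left fun p _ => ?_)
    have key2 := sum_singles_sum L2
      (fun q d => ((1 : ℚ) * d) • Finsupp.single ((p.1 ++ q.1, p.2 ++ q.2)) (1 : ℚ))
      (fun q => by simp)
      (fun q c d => by simp [mul_add, add_smul])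
    beta_reduce
    rw [key2]
    simp [List.map_map, Function.comp_def]

lemma mapDomain_list_sum_single {α β : Type*} (g : α → β) (L : List α) :
    Finsupp.mapDomain (M := ℚ) g ((L.map fun p => Finsupp.single p (1 : ℚ)).sum) =
      (L.map fun p => Finsupp.single (g p) (1 : ℚ)).sum := by
  induction L with
  | nil => simp
  | cons p L ih =>
    simp only [List.map_cons, List.sum_cons, Finsupp.mapDomain_add,
      Finsupp.mapDomain_single, ih]

end Aux

/-- In the Connes–Kreimer Hopf algebra of decorated rooted trees, the grafting operator
`B_a^+` is a Hochschild 1-cocycle: `Δ(B_a^+(t)) = (B_a^+ ⊗ id)(Δ(t)) + 1 ⊗ B_a^+(t)` for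
every forest `t`. -/
theorem connesKreimer_graft_cocycle {A : Type*} (a : A) (f : List (PTree A)) :
    deltaTree (PTree.node a f) =
      Finsupp.mapDomain (fun p : List (PTree A) × List (PTree A) =>
          ([PTree.node a p.1], p.2)) (deltaForest f) +
        Finsupp.single (([] : List (PTree A)), [PTree.node a f]) 1 := by
  rw [deltaTree, cuts_node, deltaForest_eq, mapDomain_list_sum_single, add_comm]
  congr 1
  rw [List.map_map]
  rfl
end
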